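/- arXiv:1501.01307 — 7 statements merged into one kernel-verified Lean document; each statement's English description precedes it below -/
import Mathlib

section
/- Let O be a Dedekind domain. The graph B₂(O) is connected if and only if every element of SL₂(O) is a product of elementary matrices. -/
/-- The complex of partial bases in rank 2: the simple graph whose vertices are the
vectors `v ∈ R²` belonging to some basis of `R²`, with `v` and `w` adjacent exactly
when `v ≠ w` and `{v, w}` is a basis of `R²`. -/
def partialBasisGraph (R : Type) [CommRing R] :
    SimpleGraph {v : Fin 2 → R // ∃ (b : Module.Basis (Fin 2) R (Fin 2 → R)) (i : Fin 2), b i = v} where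
  Adj v w := v ≠ w ∧
    ∃ b : Module.Basis (Fin 2) R (Fin 2 → R), ({b 0, b 1} : Set (Fin 2 → R)) = {v.1, w.1}
  symm := by
    refine ⟨?_⟩
    rintro v w ⟨hne, b, hb⟩
    exact ⟨hne.symm, b, by rw [hb, Set.pair_comm]⟩
  loopless := by
    refine ⟨?_⟩
    rintro v ⟨hne, -⟩
    exact hne rfl

namespace PBGAux

open Matrix

variable {O : Type} [CommRing O]

abbrev SL2 (O : Type) [CommRing O] := Matrix.SpecialLinearGroup (Fin 2) O

abbrev Vtx (O : Type) [CommRing O] :=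
  {v : Fin 2 → O // ∃ (b : Module.Basis (Fin 2) O (Fin 2 → O)) (i : Fin 2), b i = v}

/-- The rows of an `SL₂` matrix form a basis of `O²`. -/
noncomputable def rowBasis (A : SL2 O) : Module.Basis (Fin 2) O (Fin 2 → O) :=
  (Pi.basisFun O (Fin 2)).map ((A.1ᵀ).toLinearEquiv'
    (A.1ᵀ.invertibleOfIsUnitDet (by rw [Matrix.det_transpose, A.2]; exact isUnit_one)))

lemma rowBasis_apply (A : SL2 O) (i : Fin 2) : rowBasis A i = A.1 i := by
  ext j
  simp [rowBasis, Matrix.toLinearEquiv', Matrix.mulVec_single, Matrix.mulVec, dotProduct,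
    Pi.single_apply, Finset.sum_ite_eq]

/-- The vertex of `partialBasisGraph` given by row `i` of an `SL₂` matrix. -/
def vtx (A : SL2 O) (i : Fin 2) : Vtx O := ⟨A.1 i, rowBasis A, i, rowBasis_apply A i⟩

lemma rows_ne [Nontrivial O] (A : SL2 O) : A.1 0 ≠ A.1 1 := by
  intro h
  have hd := A.2
  rw [Matrix.det_fin_two] at hd
  rw [congrFun h 0, congrFun h 1] at hd
  rw [mul_comm, sub_self] at hd
  exact zero_ne_one hd

lemma adj_rows [Nontrivial O] (A : SL2 O) :
    (partialBasisGraph O).Adj (vtx A 0) (vtx A 1) :=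
  ⟨fun h => rows_ne A (congrArg Subtype.val h),
   rowBasis A, by rw [rowBasis_apply, rowBasis_apply]; rfl⟩

def upperE (a : O) : SL2 O := ⟨!![1,a;0,1], by simp [Matrix.det_fin_two_of]⟩
def lowerE (a : O) : SL2 O := ⟨!![1,0;a,1], by simp [Matrix.det_fin_two_of]⟩

def Wmat : SL2 O := upperE (-1) * lowerE 1 * upperE (-1)

lemma Wmat_coe : ((Wmat : SL2 O) : Matrix (Fin 2) (Fin 2) O) = !![0,-1;1,0] := by
  simp only [Wmat, Matrix.SpecialLinearGroup.coe_mul]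
  simp [Wmat, upperE, lowerE, Matrix.mul_fin_two]

def diagU (u : Oˣ) : SL2 O := upperE (u:O) * lowerE (-((u⁻¹:Oˣ):O)) * upperE (u:O) * Wmat

lemma diagU_coe (u : Oˣ) :
    ((diagU u : SL2 O) : Matrix (Fin 2) (Fin 2) O) = !![(u:O),0;0,((u⁻¹:Oˣ):O)] := by
  simp only [diagU, Matrix.SpecialLinearGroup.coe_mul, Wmat_coe]
  simp [diagU, upperE, lowerE, Wmat_coe, Matrix.mul_fin_two]

def elemSet (O : Type) [CommRing O] : Set (SL2 O) :=
  {E : SL2 O | (∃ a : O, (E : Matrix (Fin 2) (Fin 2) O) = !![1, a; 0, 1]) ∨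
    (∃ a : O, (E : Matrix (Fin 2) (Fin 2) O) = !![1, 0; a, 1])}

lemma upperE_mem (a : O) : upperE a ∈ Submonoid.closure (elemSet O) :=
  Submonoid.subset_closure (Or.inl ⟨a, rfl⟩)
lemma lowerE_mem (a : O) : lowerE a ∈ Submonoid.closure (elemSet O) :=
  Submonoid.subset_closure (Or.inr ⟨a, rfl⟩)
lemma Wmat_mem : (Wmat : SL2 O) ∈ Submonoid.closure (elemSet O) :=
  mul_mem (mul_mem (upperE_mem _) (lowerE_mem _)) (upperE_mem _)
lemma diagU_mem (u : Oˣ) : (diagU u : SL2 O) ∈ Submonoid.closure (elemSet O) :=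
  mul_mem (mul_mem (mul_mem (upperE_mem _) (lowerE_mem _)) (upperE_mem _)) Wmat_mem

lemma mul_row (A B : SL2 O) (i : Fin 2) :
    (A * B).1 i = fun j => A.1 i 0 * B.1 0 j + A.1 i 1 * B.1 1 j := by
  funext j
  simp [Matrix.mul_apply, Fin.sum_univ_two]

lemma Wmat_mul_row0 (A : SL2 O) : (Wmat * A).1 0 = -(A.1 1) := by
  funext j; simp [mul_row, Wmat_coe]

lemma Wmat_mul_row1 (A : SL2 O) : (Wmat * A).1 1 = A.1 0 := by
  funext j; simp [mul_row, Wmat_coe]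

lemma diagU_mul_row0 (u : Oˣ) (A : SL2 O) : (diagU u * A).1 0 = (u:O) • A.1 0 := by
  funext j; simp [mul_row, diagU_coe]

/-- Two `SL₂` matrices with the same first row differ by a lower elementary matrix,
hence membership in the elementary subgroup transfers. -/
lemma mem_of_row0_eq (M N : SL2 O) (h : M.1 0 = N.1 0)
    (hM : M ∈ Submonoid.closure (elemSet O)) : N ∈ Submonoid.closure (elemSet O) := by
  have key : N = lowerE ((N * M⁻¹).1 1 0) * M := by
    set L := N * M⁻¹ with hL
    have hL0 : L.1 0 = (1 : SL2 O).1 0 := by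
      funext j
      have e1 : L.1 0 j = ∑ k, M.1 0 k * (M⁻¹).1 k j := by
        rw [hL, Matrix.SpecialLinearGroup.coe_mul, Matrix.mul_apply, h]
      have e2 : (M * M⁻¹ : SL2 O).1 0 j = ∑ k, M.1 0 k * (M⁻¹).1 k j := by
        rw [Matrix.SpecialLinearGroup.coe_mul, Matrix.mul_apply]
      rw [e1, ← e2, mul_inv_cancel]
    have h00 : L.1 0 0 = 1 := by rw [congrFun hL0 0]; simp
    have h01 : L.1 0 1 = 0 := by rw [congrFun hL0 1]; simp
    have h11 : L.1 1 1 = 1 := by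
      have hd := L.2
      rw [Matrix.det_fin_two, h00, h01] at hd
      simpa using hd
    have hLe : L = lowerE (L.1 1 0) := by
      apply Subtype.ext
      ext i j
      fin_cases i <;> fin_cases j <;> simp [lowerE, h00, h01, h11]
    calc N = L * M := by rw [hL]; group
    _ = lowerE (L.1 1 0) * M := by rw [← hLe]
  rw [key]
  exact mul_mem (lowerE_mem _) hM

lemma isUnit_det_rows (b : Module.Basis (Fin 2) O (Fin 2 → O)) :
    IsUnit (Matrix.of ![b 0, b 1]).det := by
  classical
  have hinv := (Pi.basisFun O (Fin 2)).invertibleToMatrix b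
  have hU : IsUnit ((Pi.basisFun O (Fin 2)).toMatrix b).det :=
    (Matrix.isUnit_iff_isUnit_det _).mp (isUnit_of_invertible _)
  have hEq : (Pi.basisFun O (Fin 2)).toMatrix b = (Matrix.of ![b 0, b 1])ᵀ := by
    ext i j
    fin_cases j <;> simp [Module.Basis.toMatrix_apply, Matrix.transpose_apply]
  rwa [hEq, Matrix.det_transpose] at hU

lemma exists_SL2_of_pair (x y : Fin 2 → O) (h : IsUnit (Matrix.of ![x, y]).det) :
    ∃ (A : SL2 O) (c : Oˣ), A.1 0 = x ∧ A.1 1 = (c:O) • y := by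
  obtain ⟨u, hu⟩ := h
  refine ⟨⟨Matrix.of ![x, ((u⁻¹:Oˣ):O) • y], ?_⟩, u⁻¹, rfl, rfl⟩
  have key : (Matrix.of ![x, ((u⁻¹:Oˣ):O) • y]).det
      = ((u⁻¹:Oˣ):O) • (Matrix.of ![x, y]).det := by
    simp [Matrix.det_fin_two, Matrix.vecHead, Matrix.vecTail]
    ring
  rw [key, ← hu, smul_eq_mul, Units.inv_mul]

lemma fin2_cases (i : Fin 2) : i = 0 ∨ i = 1 := by
  fin_cases i
  · exact Or.inl rfl
  · exact Or.inr rfl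

lemma pair_cases {α : Type*} {a b c d : α} (h : ({a, b} : Set α) = {c, d}) (hcd : c ≠ d) :
    (a = c ∧ b = d) ∨ (a = d ∧ b = c) := by
  have ha : a ∈ ({c, d} : Set α) := h ▸ Set.mem_insert a {b}
  have hc : c ∈ ({a, b} : Set α) := h.symm ▸ Set.mem_insert c {d}
  have hd : d ∈ ({a, b} : Set α) := h.symm ▸ Set.mem_insert_of_mem c rfl
  simp only [Set.mem_insert_iff, Set.mem_singleton_iff] at ha hc hd
  rcases ha with ha | ha
  · left
    refine ⟨ha, ?_⟩
    rcases hd with hd | hd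
    · exact absurd (hd.trans ha).symm hcd
    · exact hd.symm
  · right
    refine ⟨ha, ?_⟩
    rcases hc with hc | hc
    · exact absurd (hc.trans ha) hcd
    · exact hc.symm

lemma smul_unit_row0 (u c : Oˣ) (M : SL2 O) (x : Fin 2 → O) (h : M.1 0 = (u:O) • x) :
    (diagU (c * u⁻¹) * M).1 0 = (c:O) • x := by
  rw [diagU_mul_row0, h, smul_smul, Units.val_mul, mul_assoc, Units.inv_mul, mul_one]

/-- The key edge step: elementary reachability propagates along edges of the graph. -/
lemma step [Nontrivial O] {v w : Vtx O} (hadj : (partialBasisGraph O).Adj v w)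
    (hv : ∃ (M : SL2 O) (u : Oˣ), M ∈ Submonoid.closure (elemSet O) ∧ M.1 0 = (u:O) • v.1) :
    ∃ (M : SL2 O) (u : Oˣ), M ∈ Submonoid.closure (elemSet O) ∧ M.1 0 = (u:O) • w.1 := by
  obtain ⟨hne, b, hb⟩ := hadj
  have hne' : v.1 ≠ w.1 := fun h => hne (Subtype.ext h)
  obtain ⟨Mv, u, hMv, hrow⟩ := hv
  have hdet := isUnit_det_rows b
  rcases pair_cases hb hne' with ⟨hb0, hb1⟩ | ⟨hb0, hb1⟩
  · -- b 0 = v.1, b 1 = w.1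
    rw [hb0, hb1] at hdet
    obtain ⟨A, c, hA0, hA1⟩ := exists_SL2_of_pair v.1 w.1 hdet
    have hM1 : (diagU (1 * u⁻¹) * Mv).1 0 = ((1:Oˣ):O) • v.1 := smul_unit_row0 u 1 Mv v.1 hrow
    rw [Units.val_one, one_smul] at hM1
    have hAmem : A ∈ Submonoid.closure (elemSet O) :=
      mem_of_row0_eq _ A (hM1.trans hA0.symm) (mul_mem (diagU_mem _) hMv)
    refine ⟨Wmat * A, -c, mul_mem Wmat_mem hAmem, ?_⟩
    rw [Wmat_mul_row0, hA1, Units.val_neg, neg_smul]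
  · -- b 0 = w.1, b 1 = v.1
    rw [hb0, hb1] at hdet
    obtain ⟨A, c, hA0, hA1⟩ := exists_SL2_of_pair w.1 v.1 hdet
    have hM1 : (diagU (-c * u⁻¹) * Mv).1 0 = ((-c:Oˣ):O) • v.1 := smul_unit_row0 u (-c) Mv v.1 hrow
    have hrowWA : (Wmat * A).1 0 = ((-c:Oˣ):O) • v.1 := by
      rw [Wmat_mul_row0, hA1, Units.val_neg, neg_smul]
    have hAmem : (Wmat * A) ∈ Submonoid.closure (elemSet O) :=
      mem_of_row0_eq _ (Wmat * A) (hM1.trans hrowWA.symm) (mul_mem (diagU_mem _) hMv)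
    refine ⟨Wmat * (Wmat * A), -1, mul_mem Wmat_mem hAmem, ?_⟩
    rw [Wmat_mul_row0, Wmat_mul_row1, hA0, Units.val_neg, Units.val_one, neg_smul, one_smul]

end PBGAux

open PBGAux in
/-- **Theorem.**  For a Dedekind domain `O`, the graph `B₂(O)` is connected if and only if
every element of `SL₂(O)` is a product of elementary matrices. -/
theorem partialBasisGraph_connected_iff_elementary_generation
    (O : Type) [CommRing O] [IsDomain O] [IsDedekindDomain O] :
    (partialBasisGraph O).Connected ↔
      ∀ A : Matrix.SpecialLinearGroup (Fin 2) O,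
        A ∈ Submonoid.closure {E : Matrix.SpecialLinearGroup (Fin 2) O |
          (∃ a : O, (E : Matrix (Fin 2) (Fin 2) O) = !![1, a; 0, 1]) ∨
          (∃ a : O, (E : Matrix (Fin 2) (Fin 2) O) = !![1, 0; a, 1])} := by
  constructor
  · intro hconn A
    -- every vertex is (up to a unit) the first row of a matrix in the elementary subgroup
    have mono : ∀ {x y : Vtx O}, (partialBasisGraph O).Walk x y →
        (∃ (M : SL2 O) (u : Oˣ),
          M ∈ Submonoid.closure (elemSet O) ∧ M.1 0 = (u:O) • y.1) →
        (∃ (M : SL2 O) (u : Oˣ),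
          M ∈ Submonoid.closure (elemSet O) ∧ M.1 0 = (u:O) • x.1) := by
      intro x y wlk
      induction wlk with
      | nil => exact id
      | cons hadj p ih => exact fun hy => step hadj.symm (ih hy)
    have key : ∀ x : Vtx O, ∃ (M : SL2 O) (u : Oˣ),
        M ∈ Submonoid.closure (elemSet O) ∧ M.1 0 = (u:O) • x.1 := by
      intro x
      obtain ⟨wlk⟩ := hconn.preconnected x (vtx 1 0)
      exact mono wlk ⟨1, 1, one_mem _, by simp [vtx]⟩
    obtain ⟨M, u, hM, hrow⟩ := key (vtx A 0)
    have hM1 : (diagU (1 * u⁻¹) * M).1 0 = ((1:Oˣ):O) • (vtx A 0).1 :=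
      smul_unit_row0 u 1 M (vtx A 0).1 hrow
    rw [Units.val_one, one_smul] at hM1
    exact mem_of_row0_eq _ A hM1 (mul_mem (diagU_mem _) hM)
  · intro h
    rw [SimpleGraph.connected_iff]
    refine ⟨?_, ⟨vtx 1 0⟩⟩
    -- every vertex of a matrix in the elementary subgroup is reachable from e₀
    have main : ∀ M ∈ Submonoid.closure (elemSet O),
        ∀ i, (partialBasisGraph O).Reachable (vtx 1 0) (vtx M i) := by
      intro M hM
      induction hM using Submonoid.closure_induction_left with
      | one =>
        intro i
        rcases fin2_cases i with rfl | rfl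
        · exact SimpleGraph.Reachable.refl _
        · exact (adj_rows 1).reachable
      | mul_left x hx y hy ih =>
        rcases hx with ⟨a, hxa⟩ | ⟨a, hxa⟩
        · -- upper elementary: second row preserved
          have hr1 : (x * y).1 1 = y.1 1 := by
            funext j; rw [mul_row]; simp [hxa]
          have hv1 : vtx (x * y) 1 = vtx y 1 := Subtype.ext hr1
          have R1 : (partialBasisGraph O).Reachable (vtx 1 0) (vtx (x * y) 1) := by
            rw [hv1]; exact ih 1
          intro i
          rcases fin2_cases i with rfl | rfl
          · exact R1.trans (adj_rows (x * y)).reachable.symm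
          · exact R1
        · -- lower elementary: first row preserved
          have hr0 : (x * y).1 0 = y.1 0 := by
            funext j; rw [mul_row]; simp [hxa]
          have hv0 : vtx (x * y) 0 = vtx y 0 := Subtype.ext hr0
          have R0 : (partialBasisGraph O).Reachable (vtx 1 0) (vtx (x * y) 0) := by
            rw [hv0]; exact ih 0
          intro i
          rcases fin2_cases i with rfl | rfl
          · exact R0
          · exact R0.trans (adj_rows (x * y)).reachable
    intro z₁ z₂
    suffices hall : ∀ z : Vtx O, (partialBasisGraph O).Reachable (vtx 1 0) z by
      exact (hall z₁).symm.trans (hall z₂)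
    rintro ⟨v, b, i, hbi⟩
    have hdet := isUnit_det_rows b
    rcases fin2_cases i with rfl | rfl
    · obtain ⟨A, c, hA0, -⟩ := exists_SL2_of_pair (b 0) (b 1) hdet
      have : vtx A 0 = ⟨v, b, 0, hbi⟩ := Subtype.ext (hA0.trans hbi)
      exact this ▸ main A (h A) 0
    · have hdet' : IsUnit (Matrix.of ![b 1, b 0]).det := by
        have e : (Matrix.of ![b 1, b 0]).det = -(Matrix.of ![b 0, b 1]).det := by
          simp [Matrix.det_fin_two, Matrix.vecHead, Matrix.vecTail]; ring
        rw [e]; exact hdet.neg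
      obtain ⟨A, c, hA0, -⟩ := exists_SL2_of_pair (b 1) (b 0) hdet'
      have : vtx A 0 = ⟨v, b, 1, hbi⟩ := Subtype.ext (hA0.trans hbi)
      exact this ▸ main A (h A) 0
end

section
/- Let O be a Dedekind domain with fraction field K and M a finitely generated projective O-module. The map sending a direct summand U of M to the K-subspace of M ⊗_O K spanned by the image of U under the natural map M → M ⊗_O K is a bijection from the set of direct summands of M onto the set of K-subspaces of M ⊗_O K, with inverse sending a K-subspace V to the preimage of V under the natural map M → M ⊗_O K. -/
open TensorProduct

-- aux 1: local Dedekind domain is a PID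
theorem my_local_dedekind_pid (R : Type*) [CommRing R] [IsDedekindDomain R] [IsLocalRing R] :
    IsPrincipalIdealRing R := by
  by_cases h : IsField R
  · letI := h.toField
    infer_instance
  · have hb : IsLocalRing.maximalIdeal R ≠ ⊥ :=
      fun hbot => h (IsLocalRing.isField_iff_maximalIdeal_eq.mpr hbot)
    haveI : IsLocalization.AtPrime R (IsLocalRing.maximalIdeal R) :=
      IsLocalization.of_le_isUnit (fun x hx => by
      by_contra hnu
      exact hx (IsLocalRing.mem_maximalIdeal x |>.mpr hnu))
    have := IsLocalization.AtPrime.isDiscreteValuationRing_of_dedekind_domain (A := R) hb R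
    exact this.toIsPrincipalIdealRing

-- aux 2: torsion-free localizes
theorem my_nzsd_localized {R M : Type*} [CommRing R] [IsDomain R] [AddCommGroup M] [Module R M]
    [NoZeroSMulDivisors R M] (P : Ideal R) [P.IsPrime] :
    NoZeroSMulDivisors (Localization P.primeCompl) (LocalizedModule P.primeCompl M) := by
  constructor
  intro c x h
  induction c using Localization.induction_on with
  | H y =>
    obtain ⟨r, t⟩ := y
    induction x using LocalizedModule.induction_on with
    | h m s =>
      rw [LocalizedModule.mk_smul_mk] at h
      rw [show (0 : LocalizedModule P.primeCompl M) = LocalizedModule.mk 0 (t * s) from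
        (LocalizedModule.zero_mk _).symm, LocalizedModule.mk_eq] at h
      obtain ⟨u, hu⟩ := h
      simp only [smul_zero, Submonoid.smul_def, smul_smul] at hu
      by_cases hr : r = 0
      · left
        rw [hr, Localization.mk_zero]
      · right
        have hscal : (u : R) * (((t * s : P.primeCompl) : R) * r) ≠ 0 := by
          have hu0 : (u : R) ≠ 0 := fun e => u.2 (e ▸ P.zero_mem)
          have hts : ((t * s : P.primeCompl) : R) ≠ 0 := fun e => (t * s).2 (e ▸ P.zero_mem)
          exact mul_ne_zero hu0 (mul_ne_zero hts hr)
        have : m = 0 := by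
          rcases smul_eq_zero.mp hu with h' | h'
          · exact absurd h' hscal
          · exact h'
        rw [this, LocalizedModule.zero_mk]

-- aux 3: f.g. torsion-free module over a Dedekind domain is projective
theorem my_projective_of_torsionFree (R N : Type*) [CommRing R] [IsDedekindDomain R]
    [AddCommGroup N] [Module R N] [Module.Finite R N] [NoZeroSMulDivisors R N] :
    Module.Projective R N := by
  haveI : Module.FinitePresentation R N := Module.finitePresentation_of_finite R N
  apply Module.projective_of_localization_maximal
  intro I hI
  haveI := hI.isPrime
  haveI : NoZeroSMulDivisors (Localization.AtPrime I) (LocalizedModule I.primeCompl N) :=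
    my_nzsd_localized I
  haveI : IsPrincipalIdealRing (Localization.AtPrime I) := my_local_dedekind_pid _
  haveI : Module.Finite (Localization.AtPrime I) (LocalizedModule I.primeCompl N) :=
    inferInstance
  infer_instance

/-- **Lemma.**  Let `O` be a Dedekind domain with fraction field `K` and `M` a finitely
generated projective `O`-module.  Sending a direct summand `U` of `M` to the `K`-span of
its image under the natural map `M → K ⊗[O] M`, `m ↦ 1 ⊗ m`, is a bijection from the set
of direct summands of `M` onto the set of `K`-subspaces of `K ⊗[O] M`, with inverse
sending a subspace `V` to the preimage of `V` under `M → K ⊗[O] M`. -/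
theorem summand_subspace_bijection
    (O : Type) [CommRing O] [IsDomain O] [IsDedekindDomain O]
    (K : Type) [Field K] [Algebra O K] [IsFractionRing O K]
    (M : Type) [AddCommGroup M] [Module O M]
    [Module.Finite O M] [Module.Projective O M] :
    (∀ U : Submodule O M, (∃ W : Submodule O M, IsCompl U W) →
      Submodule.comap (TensorProduct.mk O K M 1)
        ((Submodule.span K ((TensorProduct.mk O K M 1) '' (U : Set M))).restrictScalars O)
        = U) ∧
    (∀ V : Submodule K (K ⊗[O] M),
      (∃ W : Submodule O M,
        IsCompl (Submodule.comap (TensorProduct.mk O K M 1) (V.restrictScalars O)) W) ∧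
      Submodule.span K ((TensorProduct.mk O K M 1) ''
        ((Submodule.comap (TensorProduct.mk O K M 1) (V.restrictScalars O)) : Set M)) = V) := by
  set ι := TensorProduct.mk O K M 1 with hι
  -- M is torsion-free
  haveI hMtf : NoZeroSMulDivisors O M := by
    obtain ⟨s, hs⟩ := Module.projective_def.mp (inferInstance : Module.Projective O M)
    haveI : Module.IsTorsionFree O M :=
      Function.Injective.moduleIsTorsionFree s hs.injective (fun c x => map_smul s c x)
    exact ⟨fun {c x} h => by
      by_cases hc : c = 0
      · exact Or.inl hc
      · exact Or.inr ((IsRegular.smul_right_injective M (isRegular_of_ne_zero hc)) (by simpa using h))⟩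
  haveI : IsLocalizedModule (nonZeroDivisors O) ι :=
    (isLocalizedModule_iff_isBaseChange (nonZeroDivisors O) K ι).mpr
      (TensorProduct.isBaseChange O M K)
  -- ι is injective
  have hinj : Function.Injective ι := by
    intro a b hab
    obtain ⟨c, hc⟩ := IsLocalizedModule.exists_of_eq (S := nonZeroDivisors O) (f := ι) hab
    have hc0 : (c : O) ≠ 0 := nonZeroDivisors.coe_ne_zero c
    exact smul_right_injective M hc0 hc
  constructor
  · -- part 1
    rintro U ⟨W, hUW⟩
    apply le_antisymm
    · intro m hm
      have hm' : ι m ∈ Submodule.span K (ι '' (U : Set M)) := hm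
      set p : M →ₗ[O] M := U.subtype ∘ₗ (U.projectionOnto W hUW) with hp
      have hpu : ∀ u ∈ U, p u = u := by
        intro u hu
        have := Submodule.projectionOnto_apply_of_mem_left hUW hu
        simp [hp, this]
      have hfix : ∀ v ∈ Submodule.span K (ι '' (U : Set M)),
          LinearMap.baseChange K p v = v := by
        intro v hv
        induction hv using Submodule.span_induction with
        | mem x hx =>
          obtain ⟨u, hu, rfl⟩ := hx
          show LinearMap.baseChange K p (1 ⊗ₜ u) = 1 ⊗ₜ u
          rw [LinearMap.baseChange_tmul, hpu u hu]
        | zero => simp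
        | add x y _ _ hx hy => simp [hx, hy]
        | smul c x _ hx => simp [hx]
      have h1 : ι (p m) = ι m := by
        have := hfix _ hm'
        rw [show ι m = 1 ⊗ₜ m from rfl] at this ⊢
        rw [LinearMap.baseChange_tmul] at this
        exact this
      have h2 : p m = m := hinj h1
      rw [← h2, hp]
      exact (U.projectionOnto W hUW m).2
    · intro m hm
      exact Submodule.subset_span ⟨m, hm, rfl⟩
  · -- part 2
    intro V
    set U := Submodule.comap ι (V.restrictScalars O) with hU
    have hmemU : ∀ m : M, m ∈ U ↔ ι m ∈ V := fun m => Iff.rfl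
    constructor
    · -- direct summand
      haveI tf : NoZeroSMulDivisors O (M ⧸ U) := by
        constructor
        intro r x h
        by_cases hr : r = 0
        · exact Or.inl hr
        · right
          obtain ⟨m, rfl⟩ := Submodule.Quotient.mk_surjective U x
          rw [← Submodule.Quotient.mk_smul, Submodule.Quotient.mk_eq_zero] at h
          have h2 : ι (r • m) ∈ V := h
          rw [map_smul, ← algebraMap_smul K r (ι m)] at h2
          have hr0 : algebraMap O K r ≠ 0 := fun e =>
            hr (IsFractionRing.injective O K (by rw [e, map_zero]))
          have : ι m ∈ V := by
            have := V.smul_mem (algebraMap O K r)⁻¹ h2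
            rwa [inv_smul_smul₀ hr0] at this
          rw [Submodule.Quotient.mk_eq_zero]
          exact this
      haveI : Module.Projective O (M ⧸ U) := my_projective_of_torsionFree O (M ⧸ U)
      obtain ⟨g, hg⟩ := Module.projective_lifting_property U.mkQ LinearMap.id
        (Submodule.mkQ_surjective U)
      refine ⟨LinearMap.range g, ?_, ?_⟩
      · rw [Submodule.disjoint_def]
        intro x hxU hxR
        obtain ⟨y, rfl⟩ := hxR
        have : U.mkQ (g y) = y := congrFun (congrArg DFunLike.coe hg) y
        have hy : y = 0 := by
          rw [← this, Submodule.mkQ_apply, Submodule.Quotient.mk_eq_zero]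
          exact hxU
        rw [hy, map_zero]
      · rw [codisjoint_iff, eq_top_iff]
        rintro m -
        rw [Submodule.mem_sup]
        refine ⟨m - g (U.mkQ m), ?_, g (U.mkQ m), ⟨U.mkQ m, rfl⟩, by abel⟩
        rw [← Submodule.Quotient.mk_eq_zero, ← Submodule.mkQ_apply, map_sub]
        have : U.mkQ (g (U.mkQ m)) = U.mkQ m := congrFun (congrArg DFunLike.coe hg) (U.mkQ m)
        rw [this, sub_self]
    · -- span equals V
      apply le_antisymm
      · rw [Submodule.span_le]
        rintro _ ⟨m, hm, rfl⟩
        exact hm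
      · intro v hv
        obtain ⟨⟨m, s⟩, rfl⟩ := IsLocalizedModule.mk'_surjective (nonZeroDivisors O) ι v
        simp only [Function.uncurry] at hv ⊢
        have hsv : (s : O) • IsLocalizedModule.mk' ι m s = ι m :=
          IsLocalizedModule.mk'_cancel' ι m s
        have hs0 : algebraMap O K (s : O) ≠ 0 := fun e =>
          nonZeroDivisors.coe_ne_zero s (IsFractionRing.injective O K (by rw [e, map_zero]))
        have hmU : m ∈ U := by
          rw [hmemU, ← hsv, ← algebraMap_smul K (s : O)]
          exact V.smul_mem _ hv
        have hveq : IsLocalizedModule.mk' ι m s =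
            (algebraMap O K (s : O))⁻¹ • ι m := by
          rw [← hsv, ← algebraMap_smul K (s : O) (IsLocalizedModule.mk' ι m s),
            inv_smul_smul₀ hs0]
        rw [hveq]
        exact Submodule.smul_mem _ _ (Submodule.subset_span ⟨m, hmU, rfl⟩)
end

section
/- Let O be a Dedekind domain with fraction field K and let n ≥ 1. A family v₁, …, v_k of elements of O^n extends to a basis of the free module O^n if and only if the submodule span_O(v₁, …, v_k) is a direct summand of O^n of rank k (that is, dim_K of its K-span in K^n equals k). -/
open IsDedekindDomain

section Shear

variable {O : Type} [CommRing O]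

/-- Row functional `x ↦ ∑ bᵢ xᵢ`. -/
noncomputable def rowMap {p : ℕ} (b : Fin p → O) : (Fin p → O) →ₗ[O] O :=
  ∑ i, b i • LinearMap.proj i

@[simp] lemma rowMap_apply {p : ℕ} (b : Fin p → O) (x : Fin p → O) :
    rowMap b x = ∑ i, b i * x i := by
  simp [rowMap, LinearMap.sum_apply]

noncomputable def shearLast {p : ℕ} (t : Fin p → O) :
    (Fin (p+1) → O) →ₗ[O] (Fin (p+1) → O) :=
  LinearMap.pi (Fin.lastCases
    (LinearMap.proj (Fin.last p) + ∑ i, t i • LinearMap.proj i.castSucc)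
    (fun i => LinearMap.proj i.castSucc))

@[simp] lemma shearLast_castSucc {p : ℕ} (t : Fin p → O) (x : Fin (p+1) → O) (i : Fin p) :
    shearLast t x i.castSucc = x i.castSucc := by
  simp [shearLast, LinearMap.pi_apply]

@[simp] lemma shearLast_last {p : ℕ} (t : Fin p → O) (x : Fin (p+1) → O) :
    shearLast t x (Fin.last p) = x (Fin.last p) + ∑ i, t i * x i.castSucc := by
  simp [shearLast, LinearMap.pi_apply, LinearMap.sum_apply]

noncomputable def shearLastEquiv {p : ℕ} (t : Fin p → O) :
    (Fin (p+1) → O) ≃ₗ[O] (Fin (p+1) → O) :=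
  LinearEquiv.ofLinear (shearLast t) (shearLast (-t))
    (by
      refine LinearMap.ext fun x => funext fun j => ?_
      induction j using Fin.lastCases with
      | last =>
        simp only [LinearMap.comp_apply, shearLast_last, shearLast_castSucc, Pi.neg_apply,
          neg_mul, Finset.sum_neg_distrib, LinearMap.id_apply]
        ring
      | cast i => simp)
    (by
      refine LinearMap.ext fun x => funext fun j => ?_
      induction j using Fin.lastCases with
      | last =>
        simp only [LinearMap.comp_apply, shearLast_last, shearLast_castSucc, Pi.neg_apply,
          neg_mul, Finset.sum_neg_distrib, LinearMap.id_apply]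
        ring
      | cast i => simp)

@[simp] lemma shearLastEquiv_castSucc {p : ℕ} (t : Fin p → O) (x : Fin (p+1) → O) (i : Fin p) :
    shearLastEquiv t x i.castSucc = x i.castSucc := shearLast_castSucc t x i

@[simp] lemma shearLastEquiv_last {p : ℕ} (t : Fin p → O) (x : Fin (p+1) → O) :
    shearLastEquiv t x (Fin.last p) = x (Fin.last p) + ∑ i, t i * x i.castSucc :=
  shearLast_last t x

noncomputable def shearCols {p : ℕ} (d : Fin p → O) :
    (Fin (p+1) → O) →ₗ[O] (Fin (p+1) → O) :=
  LinearMap.pi (Fin.lastCases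
    (LinearMap.proj (Fin.last p))
    (fun i => LinearMap.proj i.castSucc + d i • LinearMap.proj (Fin.last p)))

@[simp] lemma shearCols_castSucc {p : ℕ} (d : Fin p → O) (x : Fin (p+1) → O) (i : Fin p) :
    shearCols d x i.castSucc = x i.castSucc + d i * x (Fin.last p) := by
  simp [shearCols, LinearMap.pi_apply]

@[simp] lemma shearCols_last {p : ℕ} (d : Fin p → O) (x : Fin (p+1) → O) :
    shearCols d x (Fin.last p) = x (Fin.last p) := by
  simp [shearCols, LinearMap.pi_apply]

noncomputable def shearColsEquiv {p : ℕ} (d : Fin p → O) :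
    (Fin (p+1) → O) ≃ₗ[O] (Fin (p+1) → O) :=
  LinearEquiv.ofLinear (shearCols d) (shearCols (-d))
    (by
      refine LinearMap.ext fun x => funext fun j => ?_
      induction j using Fin.lastCases with
      | last => simp
      | cast i =>
        simp only [LinearMap.comp_apply, shearCols_castSucc, shearCols_last, Pi.neg_apply,
          neg_mul, LinearMap.id_apply]
        ring)
    (by
      refine LinearMap.ext fun x => funext fun j => ?_
      induction j using Fin.lastCases with
      | last => simp
      | cast i =>
        simp only [LinearMap.comp_apply, shearCols_castSucc, shearCols_last, Pi.neg_apply,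
          neg_mul, LinearMap.id_apply]
        ring)

@[simp] lemma shearColsEquiv_castSucc {p : ℕ} (d : Fin p → O) (x : Fin (p+1) → O) (i : Fin p) :
    shearColsEquiv d x i.castSucc = x i.castSucc + d i * x (Fin.last p) :=
  shearCols_castSucc d x i

@[simp] lemma shearColsEquiv_last {p : ℕ} (d : Fin p → O) (x : Fin (p+1) → O) :
    shearColsEquiv d x (Fin.last p) = x (Fin.last p) := shearCols_last d x

/-- `Fin.snoc` as a linear equivalence. -/
noncomputable def prodSnocEquiv (p : ℕ) :
    ((Fin p → O) × O) ≃ₗ[O] (Fin (p+1) → O) where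
  toFun z := Fin.snoc z.1 z.2
  invFun x := (fun i => x i.castSucc, x (Fin.last p))
  map_add' z w := by
    funext j
    induction j using Fin.lastCases with
    | last => simp
    | cast i => simp
  map_smul' c z := by
    funext j
    induction j using Fin.lastCases with
    | last => simp
    | cast i => simp
  left_inv z := by
    ext <;> simp
  right_inv x := by
    funext j
    induction j using Fin.lastCases with
    | last => simp
    | cast i => simp

@[simp] lemma prodSnocEquiv_castSucc {p : ℕ} (z : (Fin p → O) × O) (i : Fin p) :
    prodSnocEquiv p z i.castSucc = z.1 i := by
  simp [prodSnocEquiv]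

@[simp] lemma prodSnocEquiv_last {p : ℕ} (z : (Fin p → O) × O) :
    prodSnocEquiv p z (Fin.last p) = z.2 := by
  simp [prodSnocEquiv]

/-- Equivalence between a product submodule and the product of the submodules. -/
def prodSubmoduleEquiv {M N : Type*} [AddCommGroup M] [AddCommGroup N]
    [Module O M] [Module O N] (p : Submodule O M) (q : Submodule O N) :
    ↥(p.prod q) ≃ₗ[O] ↥p × ↥q where
  toFun x := (⟨x.1.1, x.2.1⟩, ⟨x.1.2, x.2.2⟩)
  invFun z := ⟨(z.1.1, z.2.1), ⟨z.1.2, z.2.2⟩⟩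
  map_add' _ _ := rfl
  map_smul' _ _ := rfl
  left_inv _ := rfl
  right_inv _ := rfl

end Shear

section KerFree

variable {O : Type} [CommRing O] [IsDomain O] [IsDedekindDomain O]

/-- Auxiliary: a trivial linear equivalence between subsingleton modules. -/
def subsingletonLEquiv {R M N : Type*} [Semiring R] [AddCommMonoid M] [Module R M]
    [AddCommMonoid N] [Module R N] [Subsingleton M] [Subsingleton N] : M ≃ₗ[R] N where
  toFun _ := 0
  invFun _ := 0
  map_add' _ _ := by simp
  map_smul' _ _ := by simp
  left_inv _ := Subsingleton.elim _ _
  right_inv _ := Subsingleton.elim _ _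

lemma aux_shorten' {O : Type} [CommRing O] [IsDomain O] [IsDedekindDomain O]
    (m : ℕ) (a : Fin (m+2+1) → O)
    (ha : Ideal.span (Set.range a) = ⊤) :
    ∃ t : Fin (m+2) → O,
      Ideal.span (Set.range (fun i : Fin (m+2) => a i.castSucc + t i * a (Fin.last (m+2)))) = ⊤ := by
  classical
  have h10 : (1 : Fin (m+2)) ≠ 0 := one_ne_zero
  set L := a (Fin.last (m+2)) with hLdef
  by_cases hL : L = 0
  · refine ⟨0, ?_⟩
    rw [eq_top_iff, ← ha]
    refine Ideal.span_le.mpr ?_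
    rintro x ⟨i, rfl⟩
    induction i using Fin.lastCases with
    | last => simp only [← hLdef, hL]; exact Submodule.zero_mem _
    | cast j =>
      refine Ideal.subset_span ⟨j, ?_⟩
      simp
  · set t₀ : O := if a (0 : Fin (m+2+1)) = 0 then 1 else 0 with ht₀
    have hb0 : a (0 : Fin (m+2+1)) + t₀ * L ≠ 0 := by
      by_cases h : a (0 : Fin (m+2+1)) = 0 <;> simp [ht₀, h, hL]
    set b₀ := a (0 : Fin (m+2+1)) + t₀ * L with hb₀def
    have hSfin : {v : HeightOneSpectrum O | b₀ ∈ v.asIdeal}.Finite := by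
      have := Ideal.finite_factors (I := Ideal.span {b₀})
        (by simpa [Ideal.span_singleton_eq_bot] using hb0)
      refine this.subset ?_
      intro v hv
      exact (Ideal.dvd_span_singleton).mpr hv
    set F := hSfin.toFinset with hF
    set c : HeightOneSpectrum O → O := fun v =>
      if (∀ j : Fin (m+2), j ≠ 0 → a j.castSucc ∈ v.asIdeal) then 1 else 0 with hc
    have hcop : Pairwise fun (v w : {x // x ∈ F}) =>
        IsCoprime (v.1.asIdeal) (w.1.asIdeal) := by
      intro v w hvw
      rw [Ideal.isCoprime_iff_sup_eq]
      refine Ideal.IsMaximal.coprime_of_ne ?_ ?_ ?_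
      · exact v.1.isPrime.isMaximal v.1.ne_bot
      · exact w.1.isPrime.isMaximal w.1.ne_bot
      · intro h
        exact hvw (Subtype.ext (HeightOneSpectrum.ext h))
    obtain ⟨r1, hr1⟩ := Ideal.exists_forall_sub_mem_ideal (I := fun v : {x // x ∈ F} => v.1.asIdeal)
      hcop (fun v => c v.1)
    obtain ⟨r0, hr0⟩ := Ideal.exists_forall_sub_mem_ideal (I := fun v : {x // x ∈ F} => v.1.asIdeal)
      hcop (fun _ => 0)
    set t : Fin (m+2) → O := fun i => if i = 0 then t₀ else if i = 1 then r1 else r0 with htdef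
    refine ⟨t, ?_⟩
    by_contra hne
    obtain ⟨M, hMmax, hMle⟩ := Ideal.exists_le_maximal _ hne
    set b : Fin (m+2) → O := fun i => a i.castSucc + t i * L with hbdef
    have hbM : ∀ i, b i ∈ M := fun i => hMle (Ideal.subset_span ⟨i, rfl⟩)
    have hb0M : b₀ ∈ M := by
      have := hbM 0
      simpa [hbdef, htdef] using this
    have hMbot : M ≠ ⊥ := by
      intro h
      rw [h, Ideal.mem_bot] at hb0M
      exact hb0 hb0M
    set v : HeightOneSpectrum O := ⟨M, hMmax.isPrime, hMbot⟩ with hv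
    have hvF : v ∈ F := by
      simp only [hF, Set.Finite.mem_toFinset, Set.mem_setOf_eq]
      exact hb0M
    by_cases hcase : ∀ j : Fin (m+2), j ≠ 0 → a j.castSucc ∈ M
    · have hcv : c v = 1 := by simp only [hc, hv]; rw [if_pos hcase]
      by_cases hLM : L ∈ M
      · have hall : ∀ i, a i ∈ M := by
          intro i
          induction i using Fin.lastCases with
          | last => exact hLM
          | cast j =>
            by_cases hj : j = 0
            · subst hj
              have h1 : t₀ * L ∈ M := Ideal.mul_mem_left _ _ hLM
              rw [Fin.castSucc_zero]
              have he : a (0 : Fin (m+2+1)) = b₀ - t₀ * L := by rw [hb₀def]; ring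
              rw [he]
              exact M.sub_mem hb0M h1
            · exact hcase j hj
        have hle : Ideal.span (Set.range a) ≤ M :=
          Ideal.span_le.mpr (by rintro x ⟨i, rfl⟩; exact hall i)
        rw [ha] at hle
        exact hMmax.ne_top (top_unique hle)
      · have ht1 : t 1 = r1 := by simp [htdef, h10]
        have hr1v : r1 - 1 ∈ M := by
          have := hr1 ⟨v, hvF⟩
          rwa [hcv] at this
        have ht1nM : t 1 ∉ M := by
          rw [ht1]
          intro h
          have := M.sub_mem h hr1v
          simp only [sub_sub_cancel] at this
          exact hMmax.ne_top (Ideal.eq_top_of_isUnit_mem _ this isUnit_one)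
        have ha1M : a (1 : Fin (m+2)).castSucc ∈ M := hcase 1 h10
        have htL : t 1 * L ∈ M := by
          have := M.sub_mem (hbM 1) ha1M
          simpa [hbdef] using this
        rcases (hMmax.isPrime.mem_or_mem htL) with h | h
        · exact ht1nM h
        · exact hLM h
    · push_neg at hcase
      obtain ⟨j, hj0, hjM⟩ := hcase
      have hcv : c v = 0 := by
        simp only [hc, hv]
        rw [if_neg]
        intro h
        exact hjM (h j hj0)
      have htjM : t j ∈ M := by
        by_cases hj1 : j = 1
        · subst hj1
          have := hr1 ⟨v, hvF⟩
          rw [hcv, sub_zero] at this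
          simpa [htdef, h10] using this
        · have := hr0 ⟨v, hvF⟩
          rw [sub_zero] at this
          simpa [htdef, hj0, hj1] using this
      have haj : a j.castSucc ∈ M := by
        have h2 : t j * L ∈ M := Ideal.mul_mem_right L M htjM
        have := M.sub_mem (hbM j) h2
        simpa [hbdef] using this
      exact hjM haj

lemma row_eq {O : Type} [CommRing O] (p : ℕ) (φ : (Fin p → O) →ₗ[O] O) (x : Fin p → O) :
    φ x = ∑ i, x i * φ (Pi.single i 1) := by
  rw [LinearMap.pi_apply_eq_sum_univ]
  refine Finset.sum_congr rfl fun i _ => ?_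
  rw [smul_eq_mul]
  refine congrArg (fun y => x i * y) (congrArg φ ?_)
  funext j
  simp [Pi.single_apply, eq_comm]

lemma aux_ker_free (m : ℕ) (φ : (Fin (m+1) → O) →ₗ[O] O) (hφ : Function.Surjective φ) :
    Nonempty (↥(LinearMap.ker φ) ≃ₗ[O] (Fin m → O)) := by
  induction m with
  | zero =>
    -- the single coefficient is a unit, so the kernel is trivial
    obtain ⟨s, hs⟩ := hφ 1
    have hφx : ∀ x : Fin 1 → O, φ x = x 0 * φ (Pi.single 0 1) := by
      intro x
      rw [row_eq 1 φ x]
      simp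
    have hker : LinearMap.ker φ = ⊥ := by
      rw [LinearMap.ker_eq_bot']
      intro x hx
      rw [hφx x] at hx
      have hs' : s 0 * φ (Pi.single 0 1) = 1 := by rw [← hφx]; exact hs
      have h0 : x 0 = 0 := by
        rcases mul_eq_zero.mp hx with h | h
        · exact h
        · rw [h, mul_zero] at hs'; exact absurd hs' zero_ne_one
      funext i
      have hi : i = 0 := Fin.fin_one_eq_zero i
      rw [hi, h0]
      rfl
    have : Subsingleton ↥(LinearMap.ker φ) := by
      rw [hker]
      infer_instance
    exact ⟨subsingletonLEquiv⟩
  | succ m ih =>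
    match m, ih with
    | 0, _ =>
      -- length-two unimodular row
      set a := φ (Pi.single 0 1) with hadef
      set b := φ (Pi.single 1 1) with hbdef
      have hφx : ∀ x : Fin 2 → O, φ x = x 0 * a + x 1 * b := by
        intro x
        rw [row_eq 2 φ x, Fin.sum_univ_two]
      obtain ⟨w, hw⟩ := hφ 1
      have hst : w 0 * a + w 1 * b = 1 := by rw [← hφx]; exact hw
      set s := w 0
      set t := w 1
      set g : Fin 2 → O := ![b, -a] with hgdef
      have hg : φ g = 0 := by
        rw [hφx]
        simp [hgdef]
        ring
      set f : O →ₗ[O] ↥(LinearMap.ker φ) :=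
        LinearMap.codRestrict _ (LinearMap.toSpanSingleton O _ g)
          (fun c => by
            rw [LinearMap.mem_ker, LinearMap.toSpanSingleton_apply, map_smul, hg, smul_zero]) with hf
      have hginj : Function.Injective f := by
        intro c c' hcc
        have h1 : c • g = c' • g := congrArg Subtype.val hcc
        have h2 : c * b = c' * b := by
          have := congrFun h1 0
          simpa [hgdef] using this
        have h3 : c * (-a) = c' * (-a) := by
          have := congrFun h1 1
          simpa [hgdef] using this
        by_contra hne
        have hb0 : b = 0 := by
          by_contra hb0
          exact hne (mul_right_cancel₀ hb0 h2)
        have ha0 : a = 0 := by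
          by_contra ha0
          exact hne (mul_right_cancel₀ (neg_ne_zero.mpr ha0) h3)
        rw [hb0, ha0, mul_zero, mul_zero, add_zero] at hst
        exact zero_ne_one hst
      have hgsurj : Function.Surjective f := by
        rintro ⟨x, hx⟩
        rw [LinearMap.mem_ker, hφx] at hx
        refine ⟨t * x 0 - s * x 1, ?_⟩
        apply Subtype.ext
        show (t * x 0 - s * x 1) • g = x
        funext j
        match j with
        | 0 =>
          show (t * x 0 - s * x 1) * b = x 0
          linear_combination x 0 * hst - s * hx
        | 1 =>
          show (t * x 0 - s * x 1) * (-a) = x 1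
          linear_combination x 1 * hst - t * hx
      have e0 : O ≃ₗ[O] (Fin 1 → O) := (LinearEquiv.funUnique (Fin 1) O O).symm
      exact ⟨(LinearEquiv.ofBijective f ⟨hginj, hgsurj⟩).symm.trans e0⟩
    | (m+1), ih =>
      -- inductive step via row shortening
      set a : Fin (m+2+1) → O := fun i => φ (Pi.single i 1) with hadef
      have hφx : ∀ x, φ x = ∑ i, x i * a i := by
        intro x
        exact row_eq _ φ x
      have hspan : Ideal.span (Set.range a) = ⊤ := by
        rw [Ideal.eq_top_iff_one]
        obtain ⟨s, hs⟩ := hφ 1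
        rw [← hs, hφx]
        exact Ideal.sum_mem _ fun i _ => Ideal.mul_mem_left _ _ (Ideal.subset_span ⟨i, rfl⟩)
      obtain ⟨t, ht⟩ := aux_shorten' m a hspan
      set L := a (Fin.last (m+2)) with hLdef
      set b : Fin (m+2) → O := fun i => a i.castSucc + t i * L with hbdef
      obtain ⟨c, hc⟩ := Ideal.mem_span_range_iff_exists_fun.mp
        (ht ▸ Submodule.mem_top : (1:O) ∈ Ideal.span (Set.range b))
      set ψ : (Fin (m+2) → O) →ₗ[O] O := rowMap b with hψdef
      have hψc : ψ c = 1 := by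
        rw [hψdef, rowMap_apply, ← hc]
        exact Finset.sum_congr rfl fun i _ => mul_comm _ _
      have hψs : Function.Surjective ψ := by
        intro y
        exact ⟨y • c, by rw [map_smul, hψc, smul_eq_mul, mul_one]⟩
      set d : Fin (m+2) → O := fun i => -(c i * L) with hddef
      set U : ((Fin (m+2) → O) × O) ≃ₗ[O] (Fin (m+2+1) → O) :=
        (prodSnocEquiv (m+2)).trans ((shearColsEquiv d).trans (shearLastEquiv t)) with hUdef
      have hU : ∀ z : (Fin (m+2) → O) × O, φ (U z) = ψ z.1 := by
        intro z
        rw [hφx, hψdef, rowMap_apply]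
        have hUcs : ∀ i : Fin (m+2), (U z) i.castSucc = z.1 i + d i * z.2 := by
          intro i
          simp [hUdef]
        have hUlast : (U z) (Fin.last (m+2)) = z.2 + ∑ i, t i * (z.1 i + d i * z.2) := by
          simp [hUdef]
        rw [Fin.sum_univ_castSucc]
        simp only [hUcs, hUlast]
        rw [add_mul, Finset.sum_mul]
        have key : ∑ i, (z.1 i + d i * z.2) * a i.castSucc
            + ∑ i, (t i * (z.1 i + d i * z.2)) * L
            = ∑ i, b i * z.1 i - z.2 * L := by
          rw [← Finset.sum_add_distrib]
          have step : ∀ i ∈ Finset.univ, (z.1 i + d i * z.2) * a i.castSucc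
              + (t i * (z.1 i + d i * z.2)) * L
              = b i * z.1 i - z.2 * L * (c i * b i) := by
            intro i _
            simp only [hbdef, hddef]
            ring
          rw [Finset.sum_congr rfl step, Finset.sum_sub_distrib, ← Finset.mul_sum, hc]
          ring
        linear_combination key
      have hkercomp : LinearMap.ker (φ ∘ₗ U.toLinearMap)
          = (LinearMap.ker ψ).prod ⊤ := by
        ext z
        simp only [LinearMap.mem_ker, LinearMap.comp_apply, LinearEquiv.coe_coe,
          Submodule.mem_prod, Submodule.mem_top, and_true]
        rw [hU z]
      obtain ⟨eker⟩ := ih ψ hψs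
      -- ker φ ≃ ker (φ ∘ U) = (ker ψ).prod ⊤ ≃ ker ψ × O ≃ (Fin (m+1) → O) × O ≃ Fin (m+2) → O
      have e1 : ↥(LinearMap.ker φ) ≃ₗ[O] ↥(LinearMap.ker (φ ∘ₗ U.toLinearMap)) := by
        have hmap : (LinearMap.ker φ).map (U.symm.toLinearMap)
            = LinearMap.ker (φ ∘ₗ U.toLinearMap) := by
          rw [LinearMap.ker_comp]
          exact (Submodule.map_equiv_eq_comap_symm U.symm _).trans (by simp)
        exact (U.symm.submoduleMap (LinearMap.ker φ)).trans (LinearEquiv.ofEq _ _ hmap)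
      have e2 : ↥(LinearMap.ker (φ ∘ₗ U.toLinearMap)) ≃ₗ[O]
          ↥((LinearMap.ker ψ).prod (⊤ : Submodule O O)) := LinearEquiv.ofEq _ _ hkercomp
      have e3 : ↥((LinearMap.ker ψ).prod (⊤ : Submodule O O)) ≃ₗ[O]
          ↥(LinearMap.ker ψ) × ↥(⊤ : Submodule O O) := prodSubmoduleEquiv _ _
      have e4 : (↥(LinearMap.ker ψ) × ↥(⊤ : Submodule O O)) ≃ₗ[O] (Fin (m+1) → O) × O :=
        eker.prodCongr (Submodule.topEquiv)
      exact ⟨(((e1.trans e2).trans e3).trans e4).trans (prodSnocEquiv (m+1))⟩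
  
end KerFree

section Cancel

variable {O : Type} [CommRing O] [IsDomain O] [IsDedekindDomain O]

def zeroProdEquiv (W : Type) [AddCommGroup W] [Module O W] :
    ((Fin 0 → O) × W) ≃ₗ[O] W where
  toFun z := z.2
  invFun w := (fun i => i.elim0, w)
  map_add' _ _ := rfl
  map_smul' _ _ := rfl
  left_inv z := by
    refine Prod.ext ?_ rfl
    funext i
    exact i.elim0
  right_inv _ := rfl

lemma aux_cancel (k : ℕ) : ∀ (m : ℕ) (W : Type) [AddCommGroup W] [Module O W],
    k ≤ m → (((Fin k → O) × W) ≃ₗ[O] (Fin m → O)) →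
    Nonempty (W ≃ₗ[O] (Fin (m - k) → O)) := by
  induction k with
  | zero =>
    intro m W _ _ _ e
    exact ⟨((zeroProdEquiv W).symm.trans e :)⟩
  | succ k ih =>
    rintro (_ | m) W _ _ hkm e
    · omega
    · -- build e' : ((Fin k → O) × W) × O ≃ₗ (Fin (m+1) → O)
      have e1a : (((Fin k → O) × W) × O) ≃ₗ[O] ((Fin k → O) × (W × O)) :=
        LinearEquiv.prodAssoc O (Fin k → O) W O
      have e1b : ((Fin k → O) × (W × O)) ≃ₗ[O] ((Fin k → O) × (O × W)) :=
        (LinearEquiv.refl O (Fin k → O)).prodCongr (LinearEquiv.prodComm O W O)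
      have e1c : (((Fin k → O) × O) × W) ≃ₗ[O] ((Fin k → O) × (O × W)) :=
        LinearEquiv.prodAssoc O (Fin k → O) O W
      have e1 : (((Fin k → O) × W) × O) ≃ₗ[O] ((Fin k → O) × O) × W :=
        (e1a.trans e1b).trans e1c.symm
      have e2 : ((Fin k → O) × O) ≃ₗ[O] (Fin (k+1) → O) := prodSnocEquiv k
      have e' : (((Fin k → O) × W) × O) ≃ₗ[O] (Fin (m+1) → O) :=
        (e1.trans (e2.prodCongr (LinearEquiv.refl O W))).trans e
      set φ : (Fin (m+1) → O) →ₗ[O] O :=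
        (LinearMap.snd O ((Fin k → O) × W) O) ∘ₗ e'.symm.toLinearMap with hφdef
      have hφs : Function.Surjective φ := by
        intro y
        exact ⟨e' (0, y), by simp [hφdef]⟩
      have hj : ∀ p : (Fin k → O) × W, φ (e' (p, 0)) = 0 := by
        intro p
        simp [hφdef]
      set j : ((Fin k → O) × W) →ₗ[O] ↥(LinearMap.ker φ) :=
        LinearMap.codRestrict _ (e'.toLinearMap ∘ₗ LinearMap.inl O _ O)
          (fun p => by rw [LinearMap.mem_ker]; exact hj p) with hjdef
      have hjinj : Function.Injective j := by
        intro p q hpq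
        have : e' (p, 0) = e' (q, 0) := congrArg Subtype.val hpq
        have := e'.injective this
        exact congrArg Prod.fst this
      have hjsurj : Function.Surjective j := by
        rintro ⟨x, hx⟩
        refine ⟨(e'.symm x).1, ?_⟩
        apply Subtype.ext
        show e' ((e'.symm x).1, 0) = x
        have h2 : (e'.symm x).2 = 0 := by
          rw [LinearMap.mem_ker, hφdef] at hx
          exact hx
        conv_rhs => rw [← e'.apply_symm_apply x]
        congr 1
        exact Prod.ext rfl h2.symm
      obtain ⟨eker⟩ := aux_ker_free m φ hφs
      have eP : ((Fin k → O) × W) ≃ₗ[O] (Fin m → O) :=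
        (LinearEquiv.ofBijective j ⟨hjinj, hjsurj⟩).trans eker
      obtain ⟨eW⟩ := ih m W (by omega) eP
      refine ⟨eW.trans (LinearEquiv.funCongrLeft O O (finCongr ?_))⟩
      omega

end Cancel

/-- **Lemma.**  Let `O` be a Dedekind domain with fraction field `K` and `n ≥ 1`.  A family
`v₁, …, v_k` of elements of `O^n` extends to a basis of `O^n` if and only if its `O`-span
is a direct summand of `O^n` of rank `k`, i.e. the `K`-dimension of the `K`-span of its
image in `K^n` equals `k`. -/
theorem extends_to_basis_iff_span_summand_rank
    (O : Type) [CommRing O] [IsDomain O] [IsDedekindDomain O]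
    (K : Type) [Field K] [Algebra O K] [IsFractionRing O K]
    (n k : ℕ) (hn : 1 ≤ n) (v : Fin k → (Fin n → O)) :
    (∃ (b : Module.Basis (Fin n) O (Fin n → O)) (ι : Fin k ↪ Fin n), ∀ i, b (ι i) = v i) ↔
      ((∃ W : Submodule O (Fin n → O), IsCompl (Submodule.span O (Set.range v)) W) ∧
        Module.finrank K (Submodule.span K
          ((fun (x : Fin n → O) (j : Fin n) => algebraMap O K (x j)) ''
            ((Submodule.span O (Set.range v)) : Set (Fin n → O)))) = k) := by
  classical
  set M := Submodule.span O (Set.range v) with hM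
  set f : (Fin n → O) →ₗ[O] (Fin n → K) := (Algebra.linearMap O K).compLeft (Fin n) with hfdef
  have hfapp : ∀ x : Fin n → O, f x = fun j => algebraMap O K (x j) := fun x => rfl
  have himg : (fun (x : Fin n → O) (j : Fin n) => algebraMap O K (x j)) ''
      (M : Set (Fin n → O)) = ⇑f '' (M : Set (Fin n → O)) := rfl
  set w : Fin k → (Fin n → K) := fun i => f (v i) with hw
  have hrange : ⇑f '' Set.range v = Set.range w := by
    rw [hw, ← Set.range_comp]
    rfl
  have hspan_eq : Submodule.span K (⇑f '' (M : Set (Fin n → O)))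
      = Submodule.span K (Set.range w) := by
    apply le_antisymm
    · rw [Submodule.span_le]
      rintro x ⟨y, hy, rfl⟩
      have h1 : f y ∈ Submodule.map f M := Submodule.mem_map_of_mem hy
      rw [hM, Submodule.map_span, hrange] at h1
      exact Submodule.span_subset_span O K (Set.range w) h1
    · apply Submodule.span_mono
      rw [← hrange]
      exact Set.image_mono Submodule.subset_span
  constructor
  · rintro ⟨b, ι, hbι⟩
    have hvb : v = b ∘ ι := by funext i; exact (hbι i).symm
    have hMb : M = Submodule.span O (b '' Set.range ι) := by
      rw [hM, hvb, Set.range_comp]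
    constructor
    · refine ⟨Submodule.span O (b '' (Set.range ι)ᶜ), ?_, ?_⟩
      · rw [hMb, Submodule.disjoint_def]
        intro x h1 h2
        rw [Module.Basis.mem_span_image] at h1 h2
        have hsupp : (b.repr x).support = ∅ := by
          have hsub : ((b.repr x).support : Set (Fin n)) ⊆ (∅ : Set (Fin n)) :=
            fun i hi => absurd (h1 hi) (h2 hi)
          exact Finset.coe_eq_empty.mp (Set.subset_empty_iff.mp hsub)
        have : b.repr x = 0 := Finsupp.support_eq_empty.mp hsupp
        exact b.repr.map_eq_zero_iff.mp this
      · rw [codisjoint_iff, hMb, ← Submodule.span_union, ← Set.image_union,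
          Set.union_compl_self, Set.image_univ, b.span_eq]
    · rw [himg, hspan_eq]
      -- the images of the basis vectors are linearly independent over K
      have hcard : Fintype.card (Fin n) = Module.finrank K (Fin n → K) := by
        rw [Module.finrank_fintype_fun_eq_card]
      have hlespan : ⊤ ≤ Submodule.span K (Set.range (fun j => f (b j))) := by
        intro x _
        rw [pi_eq_sum_univ x]
        refine Submodule.sum_mem _ fun j _ => Submodule.smul_mem _ _ ?_
        have h1 : (fun j' => if j = j' then (1:K) else 0) = f (Pi.single j 1) := by
          funext j'
          rw [hfapp]
          simp [Pi.single_apply, eq_comm]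
        rw [h1]
        have h2 : (Pi.single j 1 : Fin n → O) ∈ Submodule.span O (Set.range b) := by
          rw [b.span_eq]; trivial
        have h3 : f (Pi.single j 1) ∈ Submodule.map f (Submodule.span O (Set.range b)) :=
          Submodule.mem_map_of_mem h2
        rw [Submodule.map_span, ← Set.range_comp] at h3
        exact Submodule.span_subset_span O K _ h3
      have hfb : LinearIndependent K (fun j => f (b j)) := by
        have hb2 := (basisOfTopLeSpanOfCardEqFinrank (fun j => f (b j))
          hlespan hcard).linearIndependent
        rwa [coe_basisOfTopLeSpanOfCardEqFinrank] at hb2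
      have hwe : w = (fun j => f (b j)) ∘ ι := by
        funext i
        show f (v i) = f (b (ι i))
        rw [hbι i]
      have hwli : LinearIndependent K w := by
        rw [hwe]
        exact hfb.comp ι ι.injective
      rw [finrank_span_eq_card hwli, Fintype.card_fin]
  · rintro ⟨⟨W, hWcompl⟩, hrank⟩
    rw [himg, hspan_eq] at hrank
    have hwli : LinearIndependent K w := by
      rw [linearIndependent_iff_card_eq_finrank_span, Fintype.card_fin]
      show k = Module.finrank K ↥(Submodule.span K (Set.range w))
      exact hrank.symm
    have halg : Function.Injective fun (c : O) => c • (1:K) := by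
      intro x y h
      apply IsFractionRing.injective O K
      rwa [Algebra.algebraMap_eq_smul_one, Algebra.algebraMap_eq_smul_one]
    have hwliO : LinearIndependent O w := hwli.restrict_scalars halg
    have hvli : LinearIndependent O v := LinearIndependent.of_comp f hwliO
    have hkn : k ≤ n := by
      have := hwli.fintype_card_le_finrank
      simpa [Module.finrank_fintype_fun_eq_card] using this
    set bM : Module.Basis (Fin k) O ↥M := Module.Basis.span hvli with hbM
    have eqv : ((Fin k → O) × ↥W) ≃ₗ[O] (Fin n → O) :=
      (bM.equivFun.symm.prodCongr (LinearEquiv.refl O ↥W)).trans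
        (Submodule.prodEquivOfIsCompl M W hWcompl)
    obtain ⟨eW⟩ := aux_cancel k n ↥W hkn eqv
    set bW : Module.Basis (Fin (n-k)) O ↥W := Module.Basis.ofEquivFun eW with hbW
    set eidx : (Fin k ⊕ Fin (n-k)) ≃ Fin n := finSumFinEquiv.trans (finCongr (by omega)) with heidx
    set B : Module.Basis (Fin k ⊕ Fin (n-k)) O (Fin n → O) :=
      (bM.prod bW).map (Submodule.prodEquivOfIsCompl M W hWcompl) with hB
    refine ⟨B.reindex eidx, ⟨fun i => eidx (Sum.inl i), fun i j hij => ?_⟩, fun i => ?_⟩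
    · exact Sum.inl_injective (eidx.injective hij)
    · rw [Module.Basis.reindex_apply]
      show B (eidx.symm (eidx (Sum.inl i))) = v i
      rw [Equiv.symm_apply_apply, Module.Basis.map_apply]
      rw [Submodule.coe_prodEquivOfIsCompl']
      rw [Module.Basis.prod_apply_inl_fst, Module.Basis.prod_apply_inl_snd]
      simp only [hbM, ZeroMemClass.coe_zero, add_zero]
      exact congrArg Subtype.val (Module.Basis.span_apply hvli i)
end

section
/- Let O be a Dedekind domain, n ≥ 3, L : O^n → O a surjective O-linear map, and I ⊆ O an ideal. Let v₁, …, v_{n−1} be a partial I-basis of O^n, let v = v_j be one of these vectors with L(v) ≠ 0, and let I_σ be the ideal of O generated by L(v₁), …, L(v_{n−1}). If I_σ is not contained in I, assume additionally that L(v) − 1 ∈ I. Then there exists w ∈ O^n such that v₁, …, v_{n−1}, w is an I-basis of O^n and the ideal of O generated by L(v) and L(w) is all of O. -/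
/-- **Lemma (completing a partial `I`-basis well).**  Let `O` be a Dedekind domain, `n ≥ 3`,
`L : O^n → O` a surjective linear map and `I ⊆ O` an ideal.  Let `v₁, …, v_{n-1}` be a
partial `I`-basis of `O^n`, let `v = v_j` satisfy `L v ≠ 0`, and if the ideal `I_σ`
generated by `L v₁, …, L v_{n-1}` is not contained in `I` assume moreover `L v ≡ 1 mod I`.
Then there is `w` such that `v₁, …, v_{n-1}, w` is an `I`-basis of `O^n` and the ideal
generated by `L v` and `L w` is all of `O`. -/
theorem exists_completing_vector
    (O : Type) [CommRing O] [IsDomain O] [IsDedekindDomain O]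
    (n : ℕ) (hn : 3 ≤ n)
    (L : (Fin n → O) →ₗ[O] O) (hL : Function.Surjective L)
    (I : Ideal O)
    (v : Fin (n - 1) → (Fin n → O))
    (hpartial : ∃ (b : Module.Basis (Fin n) O (Fin n → O)) (ι : Fin (n - 1) ↪ Fin n),
      (∀ i, b (ι i) = v i) ∧ ∀ m, L (b m) ∈ I ∨ L (b m) - 1 ∈ I)
    (j : Fin (n - 1)) (hvj : L (v j) ≠ 0)
    (hcase : ¬ (Ideal.span (Set.range fun i => L (v i)) ≤ I) → L (v j) - 1 ∈ I) :
    ∃ w : Fin n → O,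
      Ideal.span {L (v j), L w} = ⊤ ∧
      ∃ (b : Module.Basis (Fin n) O (Fin n → O)) (ι : Fin (n - 1) ↪ Fin n) (j' : Fin n),
        (∀ i, b (ι i) = v i) ∧ b j' = w ∧ (∀ i, j' ≠ ι i) ∧
        ∀ m, L (b m) ∈ I ∨ L (b m) - 1 ∈ I := by
  classical
  obtain ⟨b, ι, hbv, hbI⟩ := hpartial
  set a : O := L (v j) with ha
  -- the unique index not hit by ι
  set T : Finset (Fin n) := Finset.univ.map ι with hT
  have hTcard : Tᶜ.card = 1 := by
    rw [Finset.card_compl]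
    simp only [hT, Finset.card_map, Finset.card_univ, Fintype.card_fin]
    omega
  obtain ⟨j', hj'⟩ := Finset.card_eq_one.mp hTcard
  have hj'T : j' ∉ T := by
    have : j' ∈ Tᶜ := by rw [hj']; exact Finset.mem_singleton_self j'
    simpa using this
  have hj'ι : ∀ i, j' ≠ ι i := by
    intro i h
    exact hj'T (by rw [h, hT]; exact Finset.mem_map_of_mem ι (Finset.mem_univ i))
  have hmem : ∀ m : Fin n, m ≠ j' → ∃ i, ι i = m := by
    intro m hm
    have : m ∈ T := by
      by_contra h
      have : m ∈ Tᶜ := Finset.mem_compl.mpr h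
      rw [hj'] at this
      exact hm (Finset.mem_singleton.mp this)
    simpa [hT] using this
  set s : O := L (b j') with hs
  -- 1 ∈ span (insert s (range (L ∘ v)))
  have hone : (1 : O) ∈ Ideal.span (insert s (Set.range fun i => L (v i))) := by
    have htop : Ideal.span (Set.range fun m => L (b m)) = ⊤ := by
      have h1 : Submodule.map L ⊤ = ⊤ := by
        rw [Submodule.map_top, LinearMap.range_eq_top]
        exact hL
      rw [← b.span_eq, Submodule.map_span, ← Set.range_comp, Ideal.submodule_span_eq] at h1
      exact h1
    have hle : Ideal.span (Set.range fun m => L (b m)) ≤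
        Ideal.span (insert s (Set.range fun i => L (v i))) := by
      apply Ideal.span_le.mpr
      rintro _ ⟨m, rfl⟩
      by_cases hm : m = j'
      · subst hm; exact Ideal.subset_span (Set.mem_insert _ _)
      · obtain ⟨i, rfl⟩ := hmem m hm
        show L (b (ι i)) ∈ _
        rw [hbv i]
        exact Ideal.subset_span (Set.mem_insert_of_mem _ ⟨i, rfl⟩)
    exact hle (htop ▸ Submodule.mem_top)
  -- decompose 1 = x' * s + g
  obtain ⟨x', g, hgmem, hxg⟩ : ∃ x' g, g ∈ Ideal.span (Set.range fun i => L (v i)) ∧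
      x' * s + g = 1 := by
    rw [Ideal.span_insert] at hone
    obtain ⟨p, hp, q, hq, hpq⟩ := Submodule.mem_sup.mp hone
    obtain ⟨x', hx'⟩ := Ideal.mem_span_singleton'.mp hp
    exact ⟨x', q, hq, by rw [hx']; exact hpq⟩
  -- a preimage x of g inside span (range v)
  obtain ⟨x, hxspan, hLx⟩ : ∃ x ∈ Submodule.span O (Set.range v), L x = g := by
    have : Ideal.span (Set.range fun i => L (v i)) =
        Submodule.map L (Submodule.span O (Set.range v)) := by
      rw [Submodule.map_span, ← Set.range_comp, Ideal.submodule_span_eq]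
      rfl
    rw [this] at hgmem
    obtain ⟨x, hx, hLx⟩ := hgmem
    exact ⟨x, hx, hLx⟩
  -- finitely many maximal ideals containing a
  have hSfin : {m : Ideal O | m.IsMaximal ∧ a ∈ m}.Finite := by
    have h := Ideal.finite_factors (I := Ideal.span {a}) (by simpa using hvj)
    apply Set.Finite.subset (h.image (fun v => v.asIdeal))
    rintro m ⟨hm, ham⟩
    refine ⟨⟨m, hm.isPrime, ?_⟩, ?_, rfl⟩
    · rintro rfl; exact hvj (by simpa using ham)
    · simpa [Ideal.dvd_iff_le, Ideal.span_le] using ham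
  haveI := hSfin.to_subtype
  -- CRT choice of c
  obtain ⟨c, hc⟩ := Ideal.exists_forall_sub_mem_ideal
    (I := fun m : {m : Ideal O | m.IsMaximal ∧ a ∈ m} => (m : Ideal O))
    (fun m m' hmm' => Ideal.isCoprime_iff_sup_eq.mpr
      (m.2.1.coprime_of_ne m'.2.1 (by exact_mod_cast Subtype.coe_ne_coe.mpr hmm')))
    (fun m => if s ∈ (m : Ideal O) then 1 else 0)
  have hu₀ : ∀ m : Ideal O, m.IsMaximal → a ∈ m → s + c * g ∉ m := by
    intro m hm ham hmem'
    have hcm := hc ⟨m, hm, ham⟩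
    by_cases hsm : s ∈ m
    · simp only [hsm, if_pos] at hcm
      have hgm : g ∉ m := by
        intro hgm
        exact hm.ne_top (Ideal.eq_top_of_isUnit_mem m
          (hxg ▸ Ideal.add_mem m (Ideal.mul_mem_left m x' hsm) hgm) isUnit_one)
      have hcgm : c * g ∈ m := by
        have := Ideal.sub_mem m hmem' hsm
        simpa using this
      rcases hm.isPrime.mem_or_mem hcgm with hcmem | hgmem
      · exact hm.ne_top (Ideal.eq_top_of_isUnit_mem m
          (by simpa using Ideal.sub_mem m hcmem hcm) isUnit_one.neg)
      · exact hgm hgmem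
    · simp only [hsm, if_neg, not_false_iff, sub_zero] at hcm
      apply hsm
      have : c * g ∈ m := Ideal.mul_mem_right g m hcm
      simpa using Ideal.sub_mem m hmem' this
  -- any z ≡ s + c*g mod (a) generates ⊤ with a
  have hmain : ∀ z : O, z - (s + c * g) ∈ Ideal.span {a} → Ideal.span {a, z} = ⊤ := by
    intro z hz
    by_contra htop
    obtain ⟨m, hm, hle⟩ := Ideal.exists_le_maximal _ htop
    have ham : a ∈ m := hle (Ideal.subset_span (Set.mem_insert _ _))
    have hzm : z ∈ m := hle (Ideal.subset_span (Set.mem_insert_of_mem _ rfl))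
    have : s + c * g ∈ m := by
      have h1 : z - (s + c * g) ∈ m := by
        refine Ideal.span_le.mpr ?_ hz
        simpa using ham
      simpa using Ideal.sub_mem m hzm h1
    exact hu₀ m hm ham this
  -- the adjustment t and the new vector
  set t : O := if Ideal.span (Set.range fun i => L (v i)) ≤ I then 0 else -(s + c * g) with ht
  set y : Fin n → O := c • x + t • (v j) with hy
  set w : Fin n → O := b j' + y with hw
  have hLy : L y = c * g + t * a := by
    simp [hy, map_add, map_smul, hLx, smul_eq_mul, ha]
  have hLw : L w = s + (c * g + t * a) := by
    simp [hw, map_add, hLy, hs]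
  -- repr of y at j' vanishes
  have hxrepr : b.repr x j' = 0 := by
    have hsub : Set.range v ⊆ b '' Set.range ι := by
      rintro _ ⟨i, rfl⟩
      exact ⟨ι i, ⟨i, rfl⟩, hbv i⟩
    have := Module.Basis.repr_support_subset_of_mem_span b (Set.range ι)
      (Submodule.span_mono hsub hxspan)
    by_contra h
    obtain ⟨i, hi⟩ := this (Finsupp.mem_support_iff.mpr h)
    exact hj'ι i hi.symm
  have hvjrepr : b.repr (v j) j' = 0 := by
    rw [← hbv j, Module.Basis.repr_self]
    exact Finsupp.single_eq_of_ne (fun h => hj'ι j h)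
  have hyrepr : b.repr y j' = 0 := by
    simp [hy, map_add, map_smul, hxrepr, hvjrepr]
  -- the basis replacement
  set f : (Fin n → O) →ₗ[O] (Fin n → O) :=
    LinearMap.id + LinearMap.smulRight (b.coord j') y with hf
  set f' : (Fin n → O) →ₗ[O] (Fin n → O) :=
    LinearMap.id - LinearMap.smulRight (b.coord j') y with hf'
  have hcoordy : b.coord j' y = 0 := by simp [Module.Basis.coord_apply, hyrepr]
  have key1 : ∀ z, f (f' z) = z := by
    intro z
    simp only [hf, hf', LinearMap.add_apply, LinearMap.sub_apply, LinearMap.id_apply,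
      LinearMap.smulRight_apply, map_sub, map_smul, hcoordy, smul_eq_mul, mul_zero, sub_zero]
    module
  have key2 : ∀ z, f' (f z) = z := by
    intro z
    simp only [hf, hf', LinearMap.add_apply, LinearMap.sub_apply, LinearMap.id_apply,
      LinearMap.smulRight_apply, map_add, map_smul, hcoordy, smul_eq_mul, mul_zero, add_zero]
    module
  set e : (Fin n → O) ≃ₗ[O] (Fin n → O) :=
    LinearEquiv.ofLinear f f' (LinearMap.ext key1) (LinearMap.ext key2) with he
  set b' : Module.Basis (Fin n) O (Fin n → O) := b.map e with hb'
  have hb'app : ∀ m, b' m = b m + (b.repr (b m) j') • y := by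
    intro m
    rw [hb', Module.Basis.map_apply, he, LinearEquiv.ofLinear_apply, hf]
    simp [Module.Basis.coord_apply]
  have hb'ι : ∀ i, b' (ι i) = v i := by
    intro i
    rw [hb'app, Module.Basis.repr_self, Finsupp.single_eq_of_ne (fun h => hj'ι i h)]
    simp [hbv i]
  have hb'j' : b' j' = w := by
    rw [hb'app, Module.Basis.repr_self, Finsupp.single_eq_same]
    simp [hw]
  have hb'ne : ∀ m, m ≠ j' → b' m = b m := by
    intro m hm
    rw [hb'app, Module.Basis.repr_self, Finsupp.single_eq_of_ne hm.symm]
    simp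
  refine ⟨w, ?_, b', ι, j', hb'ι, hb'j', hj'ι, ?_⟩
  · -- span {a, L w} = ⊤
    apply hmain
    rw [hLw]
    refine Ideal.mem_span_singleton'.mpr ⟨t, ?_⟩
    ring
  · intro m
    by_cases hm : m = j'
    · rw [hm, hb'j', hLw]
      by_cases hIσ : Ideal.span (Set.range fun i => L (v i)) ≤ I
      · rw [ht, if_pos hIσ]
        have hgI : g ∈ I := hIσ hgmem
        have hcgI : c * g ∈ I := Ideal.mul_mem_left I c hgI
        rcases hbI j' with hsI | hsI
        · left
          have : s + (c * g + 0 * a) = s + c * g := by ring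
          rw [this]
          exact Ideal.add_mem I hsI hcgI
        · right
          have : s + (c * g + 0 * a) - 1 = (s - 1) + c * g := by ring
          rw [this]
          exact Ideal.add_mem I hsI hcgI
      · left
        have haI : a - 1 ∈ I := hcase hIσ
        rw [ht, if_neg hIσ]
        have : s + (c * g + -(s + c * g) * a) = -((s + c * g) * (a - 1)) := by ring
        rw [this]
        exact neg_mem (Ideal.mul_mem_left I _ haI)
    · rw [hb'ne m hm]
      exact hbI m
end

section
/- Let O be a Dedekind domain and L : O^n → O a surjective O-linear map. Let σ = {v₁, …, v_{k+1}} be a family extending to a basis of O^n with k + 1 < n, and let I_σ ⊆ O be the ideal generated by L(v₁), …, L(v_{k+1}). If I_σ = (0), or I_σ = O, or k + 1 < n − 1, then σ is contained in a good basis of O^n. -/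
variable {O : Type} [CommRing O] [IsDomain O] [IsDedekindDomain O]

/-- prime avoidance choice lemma -/
lemma avoid_lemma (b c : O) (S : Finset (Ideal O))
    (hS : ∀ P ∈ S, P.IsMaximal ∧ ¬(b ∈ P ∧ c ∈ P)) :
    ∃ μ : O, ∀ P ∈ S, b + μ * c ∉ P := by
  classical
  induction S using Finset.induction_on with
  | empty => exact ⟨0, by simp⟩
  | @insert P₀ S hP₀S ih =>
    obtain ⟨μ, hμ⟩ := ih (fun P hP => hS P (Finset.mem_insert_of_mem hP))
    have hP₀ := hS P₀ (Finset.mem_insert_self _ _)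
    by_cases hbc : b + μ * c ∈ P₀
    · have hcP₀ : c ∉ P₀ := by
        intro hc
        exact hP₀.2 ⟨by simpa using P₀.sub_mem hbc (P₀.mul_mem_left μ hc), hc⟩
      have hnle : ¬ S.inf id ≤ P₀ := by
        rw [(hP₀.1.isPrime).inf_le']
        rintro ⟨P, hPS, hle⟩
        exact hP₀S (by rwa [← (hS P (Finset.mem_insert_of_mem hPS)).1.eq_of_le hP₀.1.ne_top hle])
      obtain ⟨τ, hτinf, hτP₀⟩ := Set.not_subset.mp hnle
      refine ⟨μ + τ, ?_⟩
      intro P hP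
      rcases Finset.mem_insert.mp hP with rfl | hPS
      · intro h
        have : τ * c ∈ P := by
          have := P.sub_mem h hbc
          rwa [show b + (μ + τ) * c - (b + μ * c) = τ * c by ring] at this
        rcases hP₀.1.isPrime.mem_or_mem this with h' | h'
        · exact hτP₀ h'
        · exact hcP₀ h'
      · intro h
        refine hμ P hPS ?_
        have hτP : τ ∈ P := by
          have hle : S.inf id ≤ P := Finset.inf_le hPS
          exact hle hτinf
        have heq : b + μ * c = (b + (μ + τ) * c) - τ * c := by ring
        rw [heq]
        exact P.sub_mem h (P.mul_mem_right c hτP)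
    · exact ⟨μ, fun P hP => by
        rcases Finset.mem_insert.mp hP with rfl | hPS
        · exact hbc
        · exact hμ P hPS⟩


lemma stable_range (a b c : O) (h : Ideal.span {a, b, c} = ⊤) :
    ∃ lam mu : O, Ideal.span {a + lam * c, b + mu * c} = ⊤ := by
  classical
  by_cases ha : a = 0
  · subst ha
    refine ⟨1, 0, ?_⟩
    have : Ideal.span ({b, c} : Set O) = ⊤ := by
      rw [← h]
      apply le_antisymm
      · apply Ideal.span_mono; intro x hx
        rcases hx with rfl | rfl
        · exact Or.inr (Or.inl rfl)
        · exact Or.inr (Or.inr rfl)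
      · rw [Ideal.span_le]; rintro x (rfl | rfl | rfl)
        · simpa using (Ideal.span {b, c}).zero_mem
        · exact Ideal.subset_span (Or.inl rfl)
        · exact Ideal.subset_span (Or.inr rfl)
    rw [show (0:O) + 1 * c = c by ring, show b + 0 * c = b by ring, Set.pair_comm]
    exact this
  · -- a ≠ 0 : adjust b only
    have hspan : Ideal.span ({a} : Set O) ≠ 0 := by
      simpa [Ideal.span_singleton_eq_bot] using ha
    have hfin := Ideal.finite_factors hspan
    set S : Finset (Ideal O) :=
      hfin.toFinset.image (fun v => v.asIdeal) with hSdef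
    have hSmem : ∀ P ∈ S, P.IsMaximal ∧ a ∈ P := by
      intro P hP
      simp only [hSdef, Finset.mem_image, Set.Finite.mem_toFinset] at hP
      obtain ⟨v, hv, rfl⟩ := hP
      have hle : Ideal.span {a} ≤ v.asIdeal := Ideal.le_of_dvd hv
      exact ⟨v.isPrime.isMaximal v.ne_bot, hle (Ideal.mem_span_singleton_self a)⟩
    have hbcS : ∀ P ∈ S, P.IsMaximal ∧ ¬(b ∈ P ∧ c ∈ P) := by
      intro P hP
      obtain ⟨hmax, haP⟩ := hSmem P hP
      refine ⟨hmax, ?_⟩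
      rintro ⟨hb, hc⟩
      have : Ideal.span ({a, b, c} : Set O) ≤ P := by
        rw [Ideal.span_le]; rintro x (rfl | rfl | rfl) <;> assumption
      rw [h] at this
      exact hmax.ne_top (top_le_iff.mp this)
    obtain ⟨μ, hμ⟩ := avoid_lemma b c S hbcS
    refine ⟨0, μ, ?_⟩
    rw [show a + 0 * c = a by ring]
    by_contra hne
    obtain ⟨P, hmax, hle⟩ := Ideal.exists_le_maximal _ hne
    have haP : a ∈ P := hle (Ideal.subset_span (Or.inl rfl))
    have hbP : b + μ * c ∈ P := hle (Ideal.subset_span (Or.inr rfl))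
    -- P is a maximal ideal containing a, hence in S
    have hPS : P ∈ S := by
      simp only [hSdef, Finset.mem_image, Set.Finite.mem_toFinset]
      refine ⟨⟨P, hmax.isPrime, ?_⟩, ?_, rfl⟩
      · intro hbot; rw [hbot] at haP; exact ha haP
      · simp only [Set.mem_setOf_eq]
        rw [Ideal.dvd_iff_le, Ideal.span_le]
        simpa using haP
    exact hμ P hPS hbP

lemma coprime_pair_mod (a b : O) (J : Ideal O) (h : Ideal.span {a, b} ⊔ J = ⊤) :
    ∃ x y : O, Ideal.span {x, y} = ⊤ ∧ x * a + y * b - 1 ∈ J := by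
  have h1 : (1 : O) ∈ Ideal.span {a, b} ⊔ J := by rw [h]; trivial
  obtain ⟨z, hz, t, ht, hzt⟩ := Submodule.mem_sup.mp h1
  obtain ⟨α, β, hαβ⟩ := Ideal.mem_span_pair.mp hz
  have htriple : Ideal.span ({α, β, t} : Set O) = ⊤ := by
    rw [Ideal.eq_top_iff_one]
    have : α * a + β * b + t ∈ Ideal.span ({α, β, t} : Set O) := by
      refine Ideal.add_mem _ (Ideal.add_mem _ ?_ ?_) ?_
      · exact Ideal.mul_mem_right _ _ (Ideal.subset_span (Or.inl rfl))
      · exact Ideal.mul_mem_right _ _ (Ideal.subset_span (Or.inr (Or.inl rfl)))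
      · exact Ideal.subset_span (Or.inr (Or.inr rfl))
    rwa [hαβ, hzt] at this
  obtain ⟨lam, mu, hlm⟩ := stable_range α β t htriple
  refine ⟨α + lam * t, β + mu * t, hlm, ?_⟩
  have : (α + lam * t) * a + (β + mu * t) * b - 1
      = (α * a + β * b + t) - 1 + t * (lam * a + mu * b - 1) := by ring
  rw [this, hαβ, hzt]
  simpa using J.mul_mem_right _ ht

section BasisModify

lemma sum_matrix_smul {δ : Type*} {V : Type*} [Fintype δ] [DecidableEq δ]
    [AddCommGroup V] [Module O V]
    (M N : Matrix δ δ O) (h : M * N = 1) (u : δ → V) (j : δ) :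
    ∑ m, M j m • ∑ l, N m l • u l = u j := by
  simp_rw [Finset.smul_sum, smul_smul]
  rw [Finset.sum_comm]
  have : ∀ l, ∑ m, (M j m * N m l) • u l = ((M * N) j l) • u l := by
    intro l
    rw [Matrix.mul_apply, ← Finset.sum_smul]
  simp_rw [this, h, Matrix.one_apply]
  simp [Finset.sum_ite_eq]

lemma basis_modify {V γ δ : Type*} [AddCommGroup V] [Module O V]
    [Fintype δ] [DecidableEq δ]
    (β : Module.Basis (γ ⊕ δ) O V)
    (M N : Matrix δ δ O) (hMN : M * N = 1) (hNM : N * M = 1)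
    (c : δ → V) (hc : ∀ j, c j ∈ Submodule.span O (Set.range (β ∘ Sum.inl))) :
    ∃ β' : Module.Basis (γ ⊕ δ) O V, (∀ i, β' (Sum.inl i) = β (Sum.inl i)) ∧
      ∀ j, β' (Sum.inr j) = c j + ∑ m, M j m • β (Sum.inr m) := by
  classical
  set w : γ ⊕ δ → V := Sum.elim (fun i => β (Sum.inl i))
    (fun j => c j + ∑ m, M j m • β (Sum.inr m)) with hw
  set w' : γ ⊕ δ → V := Sum.elim (fun i => β (Sum.inl i))
    (fun j => ∑ m, N j m • (β (Sum.inr m) - c m)) with hw'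
  set f : V →ₗ[O] V := β.constr ℕ w with hf
  set g : V →ₗ[O] V := β.constr ℕ w' with hg
  have hfix : ∀ (F : V →ₗ[O] V), (∀ i, F (β (Sum.inl i)) = β (Sum.inl i)) →
      ∀ z ∈ Submodule.span O (Set.range (β ∘ Sum.inl)), F z = z := by
    intro F hF z hz
    refine Submodule.span_induction ?_ ?_ ?_ ?_ hz
    · rintro x ⟨i, rfl⟩; exact hF i
    · simp
    · intro x y _ _ hx hy; rw [map_add, hx, hy]
    · intro r x _ hx; rw [map_smul, hx]
  have hfb : ∀ t, f (β t) = w t := fun t => β.constr_basis ℕ w t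
  have hgb : ∀ t, g (β t) = w' t := fun t => β.constr_basis ℕ w' t
  have hfc : ∀ j, f (c j) = c j := fun j =>
    hfix f (fun i => by rw [hfb]; rfl) (c j) (hc j)
  have hgc : ∀ j, g (c j) = c j := fun j =>
    hfix g (fun i => by rw [hgb]; rfl) (c j) (hc j)
  have hfg : f.comp g = LinearMap.id := by
    apply β.ext
    rintro (i | j)
    · rw [LinearMap.comp_apply, hgb]
      show f (β (Sum.inl i)) = _
      rw [hfb]; rfl
    · rw [LinearMap.comp_apply, hgb]
      simp only [hw', Sum.elim_inr, map_sum, map_smul, map_sub]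
      simp_rw [hfb, hfc, hw, Sum.elim_inr, add_sub_cancel_left]
      simpa using sum_matrix_smul N M hNM (fun m => β (Sum.inr m)) j
  have hgf : g.comp f = LinearMap.id := by
    apply β.ext
    rintro (i | j)
    · rw [LinearMap.comp_apply, hfb]
      show g (β (Sum.inl i)) = _
      rw [hgb]; rfl
    · rw [LinearMap.comp_apply, hfb]
      simp only [hw, Sum.elim_inr, map_add, map_sum, map_smul]
      rw [hgc]
      simp_rw [hgb, hw', Sum.elim_inr]
      rw [sum_matrix_smul M N hMN (fun m => β (Sum.inr m) - c m) j]
      simp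
  set e : V ≃ₗ[O] V := LinearEquiv.ofLinear f g hfg hgf with he
  refine ⟨β.map e, ?_, ?_⟩
  · intro i
    rw [Module.Basis.map_apply]
    show f (β (Sum.inl i)) = _
    rw [hfb]; rfl
  · intro j
    rw [Module.Basis.map_apply]
    show f (β (Sum.inr j)) = _
    rw [hfb]; rfl

lemma span_basis_top {V κ : Type*} [AddCommGroup V] [Module O V] [Fintype κ]
    (B : Module.Basis κ O V) (L : V →ₗ[O] O) (hL : Function.Surjective L) :
    Ideal.span (Set.range fun t => L (B t)) = ⊤ := by
  rw [Ideal.eq_top_iff_one]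
  obtain ⟨u, hu⟩ := hL 1
  have hrepr := B.sum_repr u
  have : (1 : O) = ∑ t, B.repr u t * L (B t) := by
    rw [← hu, ← hrepr]
    rw [hrepr]; conv_lhs => rw [← hrepr]
    simp only [map_sum, map_smul, smul_eq_mul]
  rw [this]
  exact Ideal.sum_mem _ fun t _ =>
    Ideal.mul_mem_left _ _ (Ideal.subset_span ⟨t, rfl⟩)

lemma exists_preimage_in_span {V γ' : Type*} [AddCommGroup V] [Module O V]
    (L : V →ₗ[O] O) (w : γ' → V) {z : O}
    (hz : z ∈ Ideal.span (Set.range fun t => L (w t))) :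
    ∃ u ∈ Submodule.span O (Set.range w), L u = z := by
  have heq : Ideal.span (Set.range fun t => L (w t))
      = Submodule.map L (Submodule.span O (Set.range w)) := by
    rw [Submodule.map_span]
    congr 1
    rw [← Set.range_comp]
    rfl
  rw [heq] at hz
  exact Submodule.mem_map.mp hz

end BasisModify


/-- **Proposition.**  Let `O` be a Dedekind domain and `L : O^n → O` a surjective linear
map.  Let `σ = {v₁, …, v_{k+1}}` be a partial basis of `O^n` with `k + 1 < n`, and let
`I_σ` be the ideal generated by `L v₁, …, L v_{k+1}`.  If `I_σ = (0)`, or `I_σ = O`, or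
`k + 1 < n - 1`, then `σ` is contained in a good basis of `O^n` (a basis containing a
vector with `L`-value `1`). -/
theorem contained_in_good_basis
    (O : Type) [CommRing O] [IsDomain O] [IsDedekindDomain O]
    (n k : ℕ) (hk : k + 1 < n)
    (L : (Fin n → O) →ₗ[O] O) (hL : Function.Surjective L)
    (v : Fin (k + 1) → (Fin n → O))
    (hσ : ∃ (b : Module.Basis (Fin n) O (Fin n → O)) (ι : Fin (k + 1) ↪ Fin n),
      ∀ i, b (ι i) = v i)
    (hcase : Ideal.span (Set.range fun i => L (v i)) = ⊥ ∨
      Ideal.span (Set.range fun i => L (v i)) = ⊤ ∨ k + 2 < n) :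
    ∃ (b : Module.Basis (Fin n) O (Fin n → O)) (ι : Fin (k + 1) ↪ Fin n),
      (∀ i, b (ι i) = v i) ∧ ∃ m, L (b m) = 1 := by
  classical
  obtain ⟨b, ι, hb⟩ := hσ
  haveI : Fintype ↥((Set.range ⇑ι)ᶜ : Set (Fin n)) := Fintype.ofFinite _
  haveI : Fintype ↥(Set.range ⇑ι) := Fintype.ofFinite _
  have hcard : Fintype.card ↥((Set.range ⇑ι)ᶜ : Set (Fin n)) = n - (k+1) := by
    rw [Fintype.card_compl_set, Set.card_range_of_injective ι.injective,
      Fintype.card_fin, Fintype.card_fin]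
  let e₀ : (Fin (k+1) ⊕ ↥((Set.range ⇑ι)ᶜ : Set (Fin n))) ≃ Fin n :=
    (Equiv.sumCongr (Equiv.ofInjective ι ι.injective) (Equiv.refl _)).trans
      (Equiv.Set.sumCompl (Set.range ⇑ι))
  have he₀ : ∀ i, e₀ (Sum.inl i) = ι i := fun i => by
    simp [e₀]
  rcases lt_or_ge (n - (k+1)) 2 with hsmall | hbig
  · -- case r = 1
    have hr1 : n - (k+1) = 1 := by omega
    have hn : n = k + 2 := by omega
    let eC : ↥((Set.range ⇑ι)ᶜ : Set (Fin n)) ≃ Fin 1 :=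
      Fintype.equivOfCardEq (by rw [hcard, hr1, Fintype.card_fin])
    let E : (Fin (k+1) ⊕ Fin 1) ≃ Fin n :=
      (Equiv.sumCongr (Equiv.refl _) eC.symm).trans e₀
    let B := b.reindex E.symm
    have hBt : ∀ t, B t = b (E t) := fun t => by
      rw [Module.Basis.reindex_apply, Equiv.symm_symm]
    have hBinl : ∀ i, B (Sum.inl i) = v i := fun i => by
      rw [hBt, show E (Sum.inl i) = ι i from by simp [E, he₀], hb]
    have hrange : (fun i => L (v i)) = fun i => L (B (Sum.inl i)) :=
      funext fun i => by rw [hBinl]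
    have htop : Ideal.span {L (B (Sum.inr 0))} ⊔
        Ideal.span (Set.range fun i => L (v i)) = ⊤ := by
      rw [eq_top_iff, ← span_basis_top B L hL, Ideal.span_le]
      rintro z ⟨t, rfl⟩
      cases t with
      | inl s =>
        apply Submodule.mem_sup_right
        rw [hrange]
        exact Ideal.subset_span ⟨s, rfl⟩
      | inr m =>
        apply Submodule.mem_sup_left
        fin_cases m
        exact Ideal.subset_span rfl
    obtain ⟨x, y, hxy, hmem⟩ :
        ∃ x y : O, x * y = 1 ∧ 1 - x * L (B (Sum.inr 0)) ∈
          Ideal.span (Set.range fun i => L (v i)) := by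
      rcases hcase with hI0 | hI1 | hlt
      · have hsa : Ideal.span {L (B (Sum.inr 0))} = ⊤ := by
          rw [hI0, sup_bot_eq] at htop
          exact htop
        obtain ⟨x, hx⟩ := Ideal.mem_span_singleton'.mp
          ((Ideal.eq_top_iff_one _).mp hsa)
        refine ⟨x, L (B (Sum.inr 0)), hx, ?_⟩
        rw [hx, sub_self]
        exact Ideal.zero_mem _
      · exact ⟨1, 1, one_mul 1, by rw [hI1]; trivial⟩
      · omega
    rw [hrange] at hmem
    obtain ⟨c0, hc0span, hc0L⟩ := exists_preimage_in_span L (⇑B ∘ Sum.inl) hmem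
    have hMN : (Matrix.of ![![x]]) * (Matrix.of ![![y]]) = (1 : Matrix (Fin 1) (Fin 1) O) := by
      ext i j
      fin_cases i; fin_cases j
      simp [Matrix.mul_apply, hxy]
    have hNM : (Matrix.of ![![y]]) * (Matrix.of ![![x]]) = (1 : Matrix (Fin 1) (Fin 1) O) := by
      ext i j
      fin_cases i; fin_cases j
      simp [Matrix.mul_apply, mul_comm y x, hxy]
    obtain ⟨B', hB'inl, hB'inr⟩ := basis_modify B (Matrix.of ![![x]]) (Matrix.of ![![y]])
      hMN hNM (fun _ => c0) (fun _ => hc0span)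
    have hgood : L (B' (Sum.inr 0)) = 1 := by
      rw [hB'inr 0, Fin.sum_univ_one]
      have : L c0 + x * L (B (Sum.inr 0)) = 1 := by rw [hc0L]; ring
      simpa [map_add, map_smul, smul_eq_mul] using this
    refine ⟨B'.reindex E, ⟨fun i => E (Sum.inl i), fun i j hij => by
      simpa using E.injective hij⟩, fun i => ?_, ⟨E (Sum.inr 0), ?_⟩⟩
    · simp only [Module.Basis.reindex_apply, Function.Embedding.coeFn_mk, Equiv.symm_apply_apply]
      change B' (E.symm (E (Sum.inl i))) = v i
      rw [Equiv.symm_apply_apply, hB'inl, hBinl]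
    · rw [Module.Basis.reindex_apply, Equiv.symm_apply_apply]
      exact hgood
  · -- case r ≥ 2
    let eC : ↥((Set.range ⇑ι)ᶜ : Set (Fin n)) ≃ (Fin (n - (k+1) - 2) ⊕ Fin 2) :=
      Fintype.equivOfCardEq (by
        rw [hcard, Fintype.card_sum, Fintype.card_fin, Fintype.card_fin]
        omega)
    let E : ((Fin (k+1) ⊕ Fin (n - (k+1) - 2)) ⊕ Fin 2) ≃ Fin n :=
      (Equiv.sumAssoc _ _ _).trans ((Equiv.sumCongr (Equiv.refl _) eC.symm).trans e₀)
    let B := b.reindex E.symm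
    have hBt : ∀ t, B t = b (E t) := fun t => by
      rw [Module.Basis.reindex_apply, Equiv.symm_symm]
    have hBinl : ∀ i, B (Sum.inl (Sum.inl i)) = v i := fun i => by
      rw [hBt, show E (Sum.inl (Sum.inl i)) = ι i from by simp [E, he₀], hb]
    have htop : Ideal.span {L (B (Sum.inr 0)), L (B (Sum.inr 1))} ⊔
        Ideal.span (Set.range fun t : Fin (k+1) ⊕ Fin (n - (k+1) - 2) =>
          L (B (Sum.inl t))) = ⊤ := by
      rw [eq_top_iff, ← span_basis_top B L hL, Ideal.span_le]
      rintro z ⟨t, rfl⟩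
      cases t with
      | inl s => exact Submodule.mem_sup_right (Ideal.subset_span ⟨s, rfl⟩)
      | inr m =>
        apply Submodule.mem_sup_left
        fin_cases m
        · exact Ideal.subset_span (Or.inl rfl)
        · exact Ideal.subset_span (Or.inr rfl)
    obtain ⟨x, y, hxy, hmod⟩ := coprime_pair_mod _ _ _ htop
    obtain ⟨p, q, hpq⟩ := Ideal.mem_span_pair.mp ((Ideal.eq_top_iff_one _).mp hxy)
    have hmem : 1 - (x * L (B (Sum.inr 0)) + y * L (B (Sum.inr 1))) ∈
        Ideal.span (Set.range fun t : Fin (k+1) ⊕ Fin (n - (k+1) - 2) =>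
          L (B (Sum.inl t))) := by
      have := neg_mem hmod
      simpa [neg_sub] using this
    obtain ⟨c0, hc0span, hc0L⟩ :=
      exists_preimage_in_span L (⇑B ∘ Sum.inl) hmem
    have hMN : (Matrix.of ![![x, y], ![-q, p]]) * (Matrix.of ![![p, -y], ![q, x]])
        = (1 : Matrix (Fin 2) (Fin 2) O) := by
      ext i j
      fin_cases i <;> fin_cases j <;>
        simp [Matrix.mul_apply, Fin.sum_univ_two, Matrix.one_apply] <;>
        first
          | linear_combination hpq
          | linear_combination -hpq
          | ring
    have hNM : (Matrix.of ![![p, -y], ![q, x]]) * (Matrix.of ![![x, y], ![-q, p]])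
        = (1 : Matrix (Fin 2) (Fin 2) O) := by
      ext i j
      fin_cases i <;> fin_cases j <;>
        simp [Matrix.mul_apply, Fin.sum_univ_two, Matrix.one_apply] <;>
        first
          | linear_combination hpq
          | linear_combination -hpq
          | ring
    obtain ⟨B', hB'inl, hB'inr⟩ := basis_modify B
      (Matrix.of ![![x, y], ![-q, p]]) (Matrix.of ![![p, -y], ![q, x]])
      hMN hNM ![c0, 0] (by
        intro j
        fin_cases j
        · simpa using hc0span
        · simp)
    have hgood : L (B' (Sum.inr 0)) = 1 := by
      rw [hB'inr 0, Fin.sum_univ_two]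
      have : L c0 + (x * L (B (Sum.inr 0)) + y * L (B (Sum.inr 1))) = 1 := by
        rw [hc0L]; ring
      simpa [map_add, map_smul, smul_eq_mul, add_assoc] using this
    refine ⟨B'.reindex E, ⟨fun i => E (Sum.inl (Sum.inl i)), fun i j hij => by
      simpa using E.injective hij⟩, fun i => ?_, ⟨E (Sum.inr 0), ?_⟩⟩
    · simp only [Module.Basis.reindex_apply, Function.Embedding.coeFn_mk, Equiv.symm_apply_apply]
      change B' (E.symm (E (Sum.inl (Sum.inl i)))) = v i
      rw [Equiv.symm_apply_apply, hB'inl, hBinl]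
    · rw [Module.Basis.reindex_apply, Equiv.symm_apply_apply]
      exact hgood
end

section
/- Let n ≥ 1. A permutation σ ∈ S_n is good, i.e. satisfies s_σ(k) ∈ {k, k+1} for every 1 ≤ k ≤ n, if and only if there exists ε = (ε₁, …, ε_{n−1}) ∈ {0,1}^{n−1} such that σ equals the ordered product (1 2)^{ε₁}·(2 3)^{ε₂}·⋯·(n−1 n)^{ε_{n−1}} of adjacent transpositions. Moreover, for such σ = σ_ε and each 1 ≤ k < n one has s_σ(k) = k + ε_k. -/
/-- For a permutation `σ` of `{1, …, n}` (encoded as `Equiv.Perm (Fin n)` with element `i`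
of `{1, …, n}` corresponding to `(⟨i-1, _⟩ : Fin n)`), `permSup n σ k` is
`s_σ(k) = max {σ(i) : 1 ≤ i ≤ k}`, computed in 1-based terms (it is `0` for `k = 0`). -/
def permSup (n : ℕ) (σ : Equiv.Perm (Fin n)) (k : ℕ) : ℕ :=
  (Finset.univ.filter fun i : Fin n => (i : ℕ) + 1 ≤ k).sup fun i => (σ i : ℕ) + 1

/-- A permutation `σ` of `{1, …, n}` is good if `s_σ(k) ∈ {k, k+1}` for all `1 ≤ k ≤ n`. -/
def IsGoodPerm (n : ℕ) (σ : Equiv.Perm (Fin n)) : Prop :=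
  ∀ k : ℕ, 1 ≤ k → k ≤ n → permSup n σ k = k ∨ permSup n σ k = k + 1

/-- The ordered product `(1 2)^{ε₁} · (2 3)^{ε₂} · ⋯ · (n-1 n)^{ε_{n-1}}` of adjacent
transpositions; in the `Fin n` encoding the transposition `(k k+1)` (1-based) swaps the
elements `a` and `a+1` of `Fin n` where `(a : ℕ) + 1 = k`. -/
def adjacentProd (n : ℕ) (ε : Fin n → Bool) : Equiv.Perm (Fin n) :=
  (List.ofFn fun a : Fin n =>
    if h : (a : ℕ) + 1 < n then
      (if ε a then Equiv.swap a ⟨(a : ℕ) + 1, h⟩ else 1)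
    else 1).prod


namespace GoodAux


lemma card_filter_lt (n m : ℕ) (h : m ≤ n) :
    (Finset.univ.filter fun i : Fin n => (i:ℕ) < m).card = m := by
  rcases Nat.lt_or_ge m n with h'|h'
  · rw [show (Finset.univ.filter fun i : Fin n => (i:ℕ) < m) = Finset.Iio ⟨m, h'⟩ by
      ext i; simp [Fin.lt_def]]
    simp
  · rw [show (Finset.univ.filter fun i : Fin n => (i:ℕ) < m) = Finset.univ by
      ext i
      simp only [Finset.mem_filter, Finset.mem_univ, true_and, iff_true]
      exact lt_of_lt_of_le i.isLt h']
    rw [Finset.card_univ, Fintype.card_fin]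
    omega

lemma le_permSup {n : ℕ} (σ : Equiv.Perm (Fin n)) (a : ℕ) (ha : a < n) :
    a + 1 ≤ permSup n σ (a + 1) := by
  by_contra h
  push_neg at h
  rw [permSup] at h
  have hb : ∀ i ∈ (Finset.univ.filter fun i : Fin n => (i:ℕ) + 1 ≤ a + 1),
      (σ i : ℕ) < a := by
    intro i hi
    have := Finset.le_sup (f := fun i : Fin n => (σ i : ℕ) + 1) hi
    omega
  have hsub : ((Finset.univ.filter fun i : Fin n => (i:ℕ) + 1 ≤ a + 1).image σ) ⊆
      (Finset.univ.filter fun j : Fin n => (j:ℕ) < a) := by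
    intro j hj
    simp only [Finset.mem_image] at hj
    obtain ⟨i, hi, rfl⟩ := hj
    simpa using hb i hi
  have hc1 := Finset.card_le_card hsub
  rw [Finset.card_image_of_injective _ σ.injective, card_filter_lt n a (le_of_lt ha)] at hc1
  have : (Finset.univ.filter fun i : Fin n => (i:ℕ) + 1 ≤ a + 1)
      = (Finset.univ.filter fun i : Fin n => (i:ℕ) < a + 1) := by
    apply Finset.filter_congr; intro i _; simp
  rw [this, card_filter_lt n (a+1) ha] at hc1
  omega

lemma permSup_le {n : ℕ} (σ : Equiv.Perm (Fin n)) (hσ : ∀ i : Fin n, (σ i : ℕ) ≤ (i:ℕ) + 1)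
    (a : ℕ) : permSup n σ (a + 1) ≤ a + 2 := by
  apply Finset.sup_le
  intro i hi
  simp only [Finset.mem_filter] at hi
  have := hσ i
  omega

lemma unique_ext {n : ℕ} (σ σ' : Equiv.Perm (Fin n))
    (h1 : ∀ a : Fin n, (σ a : ℕ) ≤ (a:ℕ) + 1) (h2 : ∀ a : Fin n, (σ' a : ℕ) ≤ (a:ℕ) + 1)
    (h3 : ∀ a : Fin n, ((σ a : ℕ) = (a:ℕ) + 1) ↔ ((σ' a : ℕ) = (a:ℕ) + 1)) : σ = σ' := by
  have key : ∀ m : ℕ, ∀ a : Fin n, (a:ℕ) = m → σ a = σ' a := by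
    intro m
    induction m using Nat.strong_induction_on with
    | _ m IH =>
      intro a ha
      subst ha
      by_cases hc : (σ a : ℕ) = (a:ℕ) + 1
      · have hc' := (h3 a).1 hc
        exact Fin.val_injective (by omega)
      · have hc' : ¬ ((σ' a : ℕ) = (a:ℕ) + 1) := fun h => hc ((h3 a).2 h)
        have hσa : (σ a : ℕ) ≤ a := by have := h1 a; omega
        have hσ'a : (σ' a : ℕ) ≤ a := by have := h2 a; omega
        set F := Finset.univ.filter fun i : Fin n => (i:ℕ) < (a:ℕ) with hF
        set R := Finset.univ.filter fun j : Fin n => (j:ℕ) < (a:ℕ) + 1 with hR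
        have himg : F.image σ = F.image σ' := by
          apply Finset.image_congr
          intro i hi
          simp only [hF, Finset.mem_coe, Finset.mem_filter] at hi
          exact IH (i:ℕ) hi.2 i rfl
        have hsub : F.image σ ⊆ R := by
          intro j hj
          simp only [Finset.mem_image] at hj
          obtain ⟨i, hi, rfl⟩ := hj
          simp only [hF, Finset.mem_filter] at hi
          have := h1 i
          simp only [hR, Finset.mem_filter]
          refine ⟨Finset.mem_univ _, by omega⟩
        have hcardF : (F.image σ).card = (a:ℕ) := by
          rw [Finset.card_image_of_injective _ σ.injective, hF,
            card_filter_lt n _ (le_of_lt a.isLt)]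
        have hcardR : R.card = (a:ℕ) + 1 := card_filter_lt n _ a.isLt
        have hcard1 : (R \ F.image σ).card = 1 := by
          rw [Finset.card_sdiff_of_subset hsub, hcardF, hcardR]; omega
        obtain ⟨c, hc⟩ := Finset.card_eq_one.1 hcard1
        have hmem : σ a ∈ R \ F.image σ := by
          simp only [Finset.mem_sdiff, hR, Finset.mem_filter, Finset.mem_image]
          refine ⟨⟨Finset.mem_univ _, by omega⟩, ?_⟩
          rintro ⟨i, hi, hieq⟩
          have := σ.injective hieq
          simp only [hF, Finset.mem_filter] at hi
          omega
        have hmem' : σ' a ∈ R \ F.image σ := by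
          rw [himg]
          simp only [Finset.mem_sdiff, hR, Finset.mem_filter, Finset.mem_image]
          refine ⟨⟨Finset.mem_univ _, by omega⟩, ?_⟩
          rintro ⟨i, hi, hieq⟩
          have := σ'.injective hieq
          simp only [hF, Finset.mem_filter] at hi
          omega
        rw [hc, Finset.mem_singleton] at hmem hmem'
        rw [hmem, hmem']
  ext a
  exact congrArg Fin.val (key (a:ℕ) a rfl)



def tau (n : ℕ) (ε : Fin n → Bool) (a : Fin n) : Equiv.Perm (Fin n) :=
  if h : (a : ℕ) + 1 < n then
    (if ε a then Equiv.swap a ⟨(a : ℕ) + 1, h⟩ else 1)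
  else 1

lemma adjacentProd_eq (n : ℕ) (ε : Fin n → Bool) :
    adjacentProd n ε = (List.ofFn (tau n ε)).prod := rfl

lemma drop_succ (n : ℕ) (ε : Fin n → Bool) (k : ℕ) (hk : k < n) :
    ((List.ofFn (tau n ε)).drop k).prod
      = tau n ε ⟨k, hk⟩ * ((List.ofFn (tau n ε)).drop (k+1)).prod := by
  rw [List.drop_eq_getElem_cons (by simpa using hk), List.prod_cons, List.getElem_ofFn]

lemma inv (n : ℕ) (ε : Fin n → Bool) (j : ℕ) (hj : j ≤ n) :
    ∀ x : Fin n,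
      (((((List.ofFn (tau n ε)).drop j).prod) x : ℕ) ≤ (x:ℕ) + 1) ∧
      ((x:ℕ) < j → (((List.ofFn (tau n ε)).drop j).prod) x = x) ∧
      ((x:ℕ) + 1 < n →
        (((((List.ofFn (tau n ε)).drop j).prod) x : ℕ) = (x:ℕ) + 1 ↔
          (j ≤ (x:ℕ) ∧ ε x = true))) := by
  induction hj using Nat.decreasingInduction with
  | self =>
    intro x
    have hdrop : (List.ofFn (tau n ε)).drop n = [] := by
      apply List.drop_eq_nil_of_le; simp
    rw [hdrop]
    simp only [List.prod_nil, Equiv.Perm.one_apply]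
    refine ⟨by omega, fun _ => by trivial, fun hxn => ?_⟩
    constructor
    · intro h; omega
    · rintro ⟨h, -⟩; exact absurd x.isLt (by omega)
  | of_succ k hk IH =>
    intro x
    obtain ⟨hy1, hy2, hy3⟩ := IH x
    rw [drop_succ n ε k hk, Equiv.Perm.mul_apply]
    set y := (((List.ofFn (tau n ε)).drop (k+1)).prod) x with hydef
    by_cases hswap : k + 1 < n ∧ ε ⟨k, hk⟩ = true
    · obtain ⟨hkn, hε⟩ := hswap
      have htau : tau n ε ⟨k, hk⟩ = Equiv.swap ⟨k, hk⟩ ⟨k+1, hkn⟩ := by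
        simp [tau, hkn, hε]
      rw [htau]
      rcases eq_or_ne y ⟨k, hk⟩ with h0 | h0
      · rw [h0, Equiv.swap_apply_left]
        have hyval : (y : ℕ) = k := by rw [h0]
        have hkx : k ≤ (x:ℕ) := by
          by_contra hcon
          have := hy2 (by omega)
          rw [this] at hyval
          omega
        refine ⟨by simp only [Fin.val_mk]; omega,
          fun hx => absurd hx (by omega), fun hxn => ?_⟩
        simp only [Fin.val_mk]
        constructor
        · intro h
          have hxk : (x:ℕ) = k := by omega
          have : x = ⟨k, hk⟩ := Fin.ext hxk
          exact ⟨by omega, this ▸ hε⟩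
        · rintro ⟨-, hεx⟩
          rcases Nat.eq_or_lt_of_le hkx with h' | h'
          · omega
          · -- k < x : contradiction via hy3
            have := (hy3 hxn).2 ⟨by omega, hεx⟩
            omega
      · rcases eq_or_ne y ⟨k+1, hkn⟩ with h1 | h1
        · rw [h1, Equiv.swap_apply_right]
          have hyval : (y : ℕ) = k + 1 := by rw [h1]
          have hkx : k < (x:ℕ) := by
            by_contra hcon
            rcases Nat.lt_or_ge (x:ℕ) k with h' | h'
            · have := hy2 (by omega); rw [this] at hyval; omega
            · -- x = k
              have hxk : (x:ℕ) = k := by omega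
              have := hy2 (by omega); rw [this] at hyval; omega
          refine ⟨by simp only [Fin.val_mk]; omega,
            fun hx => absurd hx (by omega), fun hxn => ?_⟩
          simp only [Fin.val_mk]
          constructor
          · intro h; omega
          · rintro ⟨-, hεx⟩
            have := (hy3 hxn).2 ⟨by omega, hεx⟩
            omega
        · rw [Equiv.swap_apply_of_ne_of_ne h0 h1]
          refine ⟨hy1, fun hx => hy2 (by omega), fun hxn => ?_⟩
          rw [hy3 hxn]
          constructor
          · rintro ⟨h', hεx⟩; exact ⟨by omega, hεx⟩
          · rintro ⟨h', hεx⟩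
            rcases Nat.eq_or_lt_of_le h' with h'' | h''
            · -- x = k : contradiction with h0
              have hxk : x = ⟨k, hk⟩ := Fin.ext h''.symm
              have := hy2 (by omega)
              rw [this, hxk] at h0
              exact absurd rfl h0
            · exact ⟨by omega, hεx⟩
    · have htau : tau n ε ⟨k, hk⟩ = 1 := by
        by_cases hkn : k + 1 < n
        · have hε : ε ⟨k, hk⟩ = false := by
            rcases Bool.eq_false_or_eq_true (ε ⟨k, hk⟩) with h | h
            · exact absurd ⟨hkn, h⟩ hswap
            · exact h
          simp [tau, hkn, hε]
        · simp [tau, hkn]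
      rw [htau, Equiv.Perm.one_apply]
      refine ⟨hy1, fun hx => hy2 (by omega), fun hxn => ?_⟩
      rw [hy3 hxn]
      constructor
      · rintro ⟨h', hεx⟩; exact ⟨by omega, hεx⟩
      · rintro ⟨h', hεx⟩
        rcases Nat.eq_or_lt_of_le h' with h'' | h''
        · -- x = k, then k+1 = x+1 < n and ε ⟨k⟩ = ε x true : contradicts hswap
          have hxk : x = ⟨k, hk⟩ := Fin.ext h''.symm
          exact absurd ⟨by omega, hxk ▸ hεx⟩ hswap
        · exact ⟨by omega, hεx⟩

lemma adjacentProd_le (n : ℕ) (ε : Fin n → Bool) (x : Fin n) :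
    (adjacentProd n ε x : ℕ) ≤ (x:ℕ) + 1 := by
  have := (inv n ε 0 (Nat.zero_le n) x).1
  simpa [adjacentProd_eq] using this

lemma adjacentProd_eq_succ_iff (n : ℕ) (ε : Fin n → Bool) (x : Fin n)
    (h : (x:ℕ) + 1 < n) :
    ((adjacentProd n ε x : ℕ) = (x:ℕ) + 1 ↔ ε x = true) := by
  have := (inv n ε 0 (Nat.zero_le n) x).2.2 h
  simp only [List.drop_zero] at this
  rw [adjacentProd_eq, this]
  simp


end GoodAux

/-- **Claim (description of good permutations).**  A permutation `σ ∈ S_n` is good (i.e.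
`s_σ(k) ∈ {k, k+1}` for all `k`) if and only if it is an ordered product
`(1 2)^{ε₁} ⋯ (n-1 n)^{ε_{n-1}}` with `ε ∈ {0,1}^{n-1}`; moreover for such `σ = σ_ε` and
each `1 ≤ k < n` one has `s_σ(k) = k + ε_k`. -/
theorem goodPerm_iff_adjacentProd (n : ℕ) (hn : 1 ≤ n) (σ : Equiv.Perm (Fin n)) :
    (IsGoodPerm n σ ↔ ∃ ε : Fin n → Bool, σ = adjacentProd n ε) ∧
    (∀ ε : Fin n → Bool, σ = adjacentProd n ε →
      ∀ a : Fin n, (a : ℕ) + 1 < n →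
        permSup n σ ((a : ℕ) + 1) = (a : ℕ) + 1 + (if ε a then 1 else 0)) := by
  constructor
  · constructor
    · intro hgood
      have hle : ∀ a : Fin n, (σ a : ℕ) ≤ (a:ℕ) + 1 := by
        intro a
        have h1 := hgood ((a:ℕ)+1) (by omega) a.isLt
        have h2 : (σ a : ℕ) + 1 ≤ permSup n σ ((a:ℕ)+1) := by
          rw [permSup]
          have hm : a ∈ Finset.univ.filter (fun i : Fin n => (i:ℕ) + 1 ≤ (a:ℕ) + 1) := by
            simp
          exact Finset.le_sup (f := fun i : Fin n => (σ i : ℕ) + 1) hm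
        omega
      refine ⟨fun a => decide ((σ a : ℕ) = (a:ℕ) + 1), ?_⟩
      apply GoodAux.unique_ext σ _ hle (GoodAux.adjacentProd_le n _)
      intro a
      by_cases han : (a:ℕ) + 1 < n
      · rw [GoodAux.adjacentProd_eq_succ_iff n _ a han]
        simp
      · have h1 : ¬ ((σ a : ℕ) = (a:ℕ) + 1) := by
          have := (σ a).isLt; omega
        have h2 : ¬ ((adjacentProd n (fun a => decide ((σ a : ℕ) = (a:ℕ) + 1)) a : ℕ)
            = (a:ℕ) + 1) := by
          have := (adjacentProd n (fun a => decide ((σ a : ℕ) = (a:ℕ) + 1)) a).isLt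
          omega
        exact iff_of_false h1 h2
    · rintro ⟨ε, rfl⟩
      intro k hk1 hkn
      have hb : k - 1 < n := by omega
      have hge := GoodAux.le_permSup (adjacentProd n ε) (k-1) hb
      have hle := GoodAux.permSup_le (adjacentProd n ε) (GoodAux.adjacentProd_le n ε) (k-1)
      have hk' : k - 1 + 1 = k := by omega
      rw [hk'] at hge hle
      omega
  · rintro ε rfl a han
    have hub : permSup n (adjacentProd n ε) ((a:ℕ)+1) ≤ (a:ℕ) + 2 :=
      GoodAux.permSup_le _ (GoodAux.adjacentProd_le n ε) (a:ℕ)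
    have hlb := GoodAux.le_permSup (adjacentProd n ε) (a:ℕ) a.isLt
    by_cases hε : ε a = true
    · have hval : (adjacentProd n ε a : ℕ) = (a:ℕ) + 1 :=
        (GoodAux.adjacentProd_eq_succ_iff n ε a han).2 hε
      have h2 : (a:ℕ) + 2 ≤ permSup n (adjacentProd n ε) ((a:ℕ)+1) := by
        rw [permSup]
        have := Finset.le_sup (f := fun i : Fin n => (adjacentProd n ε i : ℕ) + 1)
          (show a ∈ Finset.univ.filter (fun i : Fin n => (i:ℕ) + 1 ≤ (a:ℕ) + 1) by simp)
        omega
      simp only [hε, if_true]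
      omega
    · have h2 : permSup n (adjacentProd n ε) ((a:ℕ)+1) ≤ (a:ℕ) + 1 := by
        rw [permSup]
        apply Finset.sup_le
        intro i hi
        simp only [Finset.mem_filter, Finset.mem_univ, true_and] at hi
        have h1 := GoodAux.adjacentProd_le n ε i
        by_cases hia : i = a
        · subst hia
          have := GoodAux.adjacentProd_eq_succ_iff n ε i han
          have hne : ¬ ((adjacentProd n ε i : ℕ) = (i:ℕ) + 1) := fun h => hε (this.1 h)
          omega
        · have hlt : (i:ℕ) < (a:ℕ) := by
            rcases Nat.lt_or_ge (i:ℕ) (a:ℕ) with h | h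
            · exact h
            · exact absurd (Fin.ext (by omega)) hia
          omega
      have hεf : ε a = false := by simpa using hε
      simp only [hεf, Bool.false_eq_true, if_false]
      omega
end

section
/- Let n ≥ 2 and let σ ∈ S_n be a bad permutation. Set x_σ = max{x ∈ {2, …, n−1} : s_σ(x−1) > x} and y_σ = min{y ∈ {x_σ + 1, …, n} : s_σ(y) = y}, and define σ̄ = σ·(x_σ y_σ), i.e. σ̄(i) = σ(τ(i)) where τ is the transposition exchanging x_σ and y_σ. Then s_{σ̄} = s_σ; consequently σ̄ is bad, x_{σ̄} = x_σ, y_{σ̄} = y_σ, and the map σ ↦ σ̄ is an involution on the set of bad permutations (i.e. the bar of σ̄ is σ). -/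
lemma permSup_mono (n : ℕ) (σ : Equiv.Perm (Fin n)) : Monotone (permSup n σ) := by
  intro k l hkl
  apply Finset.sup_mono
  intro i hi
  simp only [Finset.mem_filter, Finset.mem_univ, true_and] at hi ⊢
  omega

lemma permSup_le (n : ℕ) (σ : Equiv.Perm (Fin n)) (k : ℕ) : permSup n σ k ≤ n :=
  Finset.sup_le fun i _ => (σ i).isLt

lemma permSup_exists (n : ℕ) (σ : Equiv.Perm (Fin n)) (k : ℕ) (hk : 1 ≤ k) (hn : 0 < n) :
    ∃ j : Fin n, (j : ℕ) + 1 ≤ k ∧ (σ j : ℕ) + 1 = permSup n σ k := by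
  obtain ⟨j, hj, hje⟩ := Finset.exists_mem_eq_sup
    (Finset.univ.filter fun i : Fin n => (i : ℕ) + 1 ≤ k)
    ⟨⟨0, hn⟩, by simp [hk]; omega⟩ (fun i => (σ i : ℕ) + 1)
  exact ⟨j, by simpa using hj, hje.symm⟩

lemma permSup_le_of_mem (n : ℕ) (σ : Equiv.Perm (Fin n)) (k : ℕ) (j : Fin n)
    (hj : (j : ℕ) + 1 ≤ k) : (σ j : ℕ) + 1 ≤ permSup n σ k :=
  Finset.le_sup (f := fun i : Fin n => (σ i : ℕ) + 1) (by simp [hj]; omega)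

/-- **Claim (the folding involution on bad permutations).**  Let `σ ∈ S_n` be a bad
permutation, let `x = x_σ` be the largest `x ∈ {2, …, n-1}` with `s_σ(x-1) > x` and
`y = y_σ` the smallest `y ∈ {x_σ+1, …, n}` with `s_σ(y) = y`, and let
`σ̄ = σ·(x_σ y_σ)` (so `σ̄(i) = σ(τ(i))` for the transposition `τ` exchanging `x_σ` and
`y_σ`).  Then `s_{σ̄} = s_σ`; consequently `σ̄` is bad, `x_{σ̄} = x_σ`, `y_{σ̄} = y_σ`,
and the bar involution applied to `σ̄` gives back `σ`. -/
theorem bad_perm_involution (n : ℕ) (hn : 2 ≤ n) (σ : Equiv.Perm (Fin n))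
    (hbad : ¬ IsGoodPerm n σ)
    (x y : ℕ)
    (hx : IsGreatest {z : ℕ | 2 ≤ z ∧ z ≤ n - 1 ∧ z < permSup n σ (z - 1)} x)
    (hy : IsLeast {z : ℕ | x + 1 ≤ z ∧ z ≤ n ∧ permSup n σ z = z} y)
    (a b : Fin n) (ha : (a : ℕ) + 1 = x) (hb : (b : ℕ) + 1 = y) :
    permSup n (σ * Equiv.swap a b) = permSup n σ ∧
    ¬ IsGoodPerm n (σ * Equiv.swap a b) ∧
    IsGreatest {z : ℕ | 2 ≤ z ∧ z ≤ n - 1 ∧ z < permSup n (σ * Equiv.swap a b) (z - 1)} x ∧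
    IsLeast {z : ℕ | x + 1 ≤ z ∧ z ≤ n ∧ permSup n (σ * Equiv.swap a b) z = z} y ∧
    (σ * Equiv.swap a b) * Equiv.swap a b = σ := by
  have hn0 : 0 < n := by omega
  obtain ⟨⟨hx2, hxn, hxs⟩, hxmax⟩ := hx
  obtain ⟨⟨hyx, hyn, hys⟩, hymin⟩ := hy
  have hxy : x < y := by omega
  -- upper bound
  have hub : ∀ k, x ≤ k → k ≤ n - 1 → permSup n σ k ≤ k + 1 := by
    intro k hk1 hk2
    rcases Nat.lt_or_ge (k + 1) n with h | h
    · by_contra hc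
      have : k + 1 ≤ x := hxmax ⟨by omega, by omega, by simpa using (by omega : k + 1 < permSup n σ k)⟩
      omega
    · have := permSup_le n σ k; omega
  -- s (x - 1) = x + 1
  have hsx1 : permSup n σ (x - 1) = x + 1 := by
    have h1 : permSup n σ (x - 1) ≤ permSup n σ x := permSup_mono n σ (by omega)
    have h2 : permSup n σ x ≤ x + 1 := hub x le_rfl (by omega)
    omega
  -- key : s k = k + 1 for x ≤ k < y
  have key : ∀ k, x ≤ k → k < y → permSup n σ k = k + 1 := by
    intro k hk
    induction k, hk using Nat.le_induction with
    | base =>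
      intro _
      have h1 : permSup n σ (x - 1) ≤ permSup n σ x := permSup_mono n σ (by omega)
      have h2 : permSup n σ x ≤ x + 1 := hub x le_rfl (by omega)
      omega
    | succ k hk ih =>
      intro hky
      have hik := ih (by omega)
      have h1 : permSup n σ k ≤ permSup n σ (k + 1) := permSup_mono n σ (by omega)
      have h2 : permSup n σ (k + 1) ≤ k + 2 := hub (k + 1) (by omega) (by omega)
      have hne : permSup n σ (k + 1) ≠ k + 1 := by
        intro hc
        have := hymin ⟨by omega, by omega, hc⟩
        omega
      omega
  -- σ b + 1 ≤ x + 1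
  have hinjf : ∀ i j : Fin n, (σ i : ℕ) + 1 = (σ j : ℕ) + 1 → i = j := by
    intro i j h
    exact σ.injective (Fin.ext (by omega))
  have hfb : (σ b : ℕ) + 1 ≤ x + 1 := by
    by_contra hc
    push_neg at hc
    have hby : (σ b : ℕ) + 1 ≤ y := by
      have := permSup_le_of_mem n σ y b (by omega)
      omega
    set v := (σ b : ℕ) + 1 with hv
    have hk : permSup n σ (v - 1) = v := by
      have := key (v - 1) (by omega) (by omega); omega
    obtain ⟨j, hj1, hj2⟩ := permSup_exists n σ (v - 1) (by omega) hn0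
    have : j = b := hinjf j b (by omega)
    omega
  -- main lemma
  have main : ∀ k, permSup n (σ * Equiv.swap a b) k = permSup n σ k := by
    intro k
    have happ : ∀ i : Fin n, ((σ * Equiv.swap a b) i : ℕ) = (σ (Equiv.swap a b i) : ℕ) := by
      intro i; rfl
    rcases Nat.lt_or_ge k x with hkx | hkx
    · -- k < x : swap fixes all elements of S k
      unfold permSup
      apply Finset.sup_congr rfl
      intro i hi
      simp only [Finset.mem_filter, Finset.mem_univ, true_and] at hi
      have hia : i ≠ a := by intro h; subst h; omega
      have hib : i ≠ b := by intro h; subst h; omega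
      rw [Equiv.Perm.mul_apply, Equiv.swap_apply_of_ne_of_ne hia hib]
    rcases Nat.lt_or_ge k y with hky | hky
    · -- x ≤ k < y
      have hsk : permSup n σ k = k + 1 := key k hkx hky
      apply le_antisymm
      · apply Finset.sup_le
        intro i hi
        simp only [Finset.mem_filter, Finset.mem_univ, true_and] at hi
        rw [Equiv.Perm.mul_apply]
        rcases eq_or_ne i a with rfl | hia
        · rw [Equiv.swap_apply_left]; omega
        rcases eq_or_ne i b with rfl | hib
        · omega
        · rw [Equiv.swap_apply_of_ne_of_ne hia hib]
          have := permSup_le_of_mem n σ k i hi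
          omega
      · -- find witness j ∈ S k, j ≠ a, j ≠ b with σ j + 1 ≥ k + 1
        rcases eq_or_ne k x with rfl | hkne
        · obtain ⟨j, hj1, hj2⟩ := permSup_exists n σ (k - 1) (by omega) hn0
          have hja : j ≠ a := by intro h; subst h; omega
          have hjb : j ≠ b := by intro h; subst h; omega
          have : ((σ * Equiv.swap a b) j : ℕ) + 1 = (σ j : ℕ) + 1 := by
            rw [happ, Equiv.swap_apply_of_ne_of_ne hja hjb]
          have hle := permSup_le_of_mem n (σ * Equiv.swap a b) k j (by omega)
          omega
        · obtain ⟨j, hj1, hj2⟩ := permSup_exists n σ k (by omega) hn0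
          have hja : j ≠ a := by
            intro h; subst h
            have : (σ j : ℕ) + 1 ≤ permSup n σ x := permSup_le_of_mem n σ x j (by omega)
            have : permSup n σ x = x + 1 := key x le_rfl (by omega)
            omega
          have hjb : j ≠ b := by intro h; subst h; omega
          have : ((σ * Equiv.swap a b) j : ℕ) + 1 = (σ j : ℕ) + 1 := by
            rw [happ, Equiv.swap_apply_of_ne_of_ne hja hjb]
          have hle := permSup_le_of_mem n (σ * Equiv.swap a b) k j hj1
          omega
    · -- y ≤ k : swap maps S k into itself
      apply le_antisymm
      · apply Finset.sup_le
        intro i hi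
        simp only [Finset.mem_filter, Finset.mem_univ, true_and] at hi
        have hmem : ((Equiv.swap a b i : Fin n) : ℕ) + 1 ≤ k := by
          rcases eq_or_ne i a with rfl | hia
          · rw [Equiv.swap_apply_left]; omega
          rcases eq_or_ne i b with rfl | hib
          · rw [Equiv.swap_apply_right]; omega
          · rw [Equiv.swap_apply_of_ne_of_ne hia hib]; omega
        have := permSup_le_of_mem n σ k (Equiv.swap a b i) hmem
        rw [Equiv.Perm.mul_apply]
        omega
      · apply Finset.sup_le
        intro i hi
        simp only [Finset.mem_filter, Finset.mem_univ, true_and] at hi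
        have hmem : ((Equiv.swap a b i : Fin n) : ℕ) + 1 ≤ k := by
          rcases eq_or_ne i a with rfl | hia
          · rw [Equiv.swap_apply_left]; omega
          rcases eq_or_ne i b with rfl | hib
          · rw [Equiv.swap_apply_right]; omega
          · rw [Equiv.swap_apply_of_ne_of_ne hia hib]; omega
        have hle := permSup_le_of_mem n (σ * Equiv.swap a b) k (Equiv.swap a b i) hmem
        have : ((σ * Equiv.swap a b) (Equiv.swap a b i) : ℕ) = (σ i : ℕ) := by
          rw [Equiv.Perm.mul_apply, Equiv.swap_apply_self]
        omega
  refine ⟨funext main, ?_, ?_, ?_, ?_⟩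
  · simp only [IsGoodPerm, main]
    exact hbad
  · constructor
    · exact ⟨hx2, hxn, by rw [main]; exact hxs⟩
    · intro z hz
      exact hxmax ⟨hz.1, hz.2.1, by rw [← main]; exact hz.2.2⟩
  · constructor
    · exact ⟨hyx, hyn, by rw [main]; exact hys⟩
    · intro z hz
      exact hymin ⟨hz.1, hz.2.1, by rw [← main]; exact hz.2.2⟩
  · rw [mul_assoc, Equiv.swap_mul_self, mul_one]
end
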